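/- arXiv:2312.03564 — 4 statements merged into one kernel-verified Lean document; each statement's English description precedes it below -/
import Mathlib

section
/- For every n ≥ 1 and every n×n square sign matrix A, the inversion number satisfies inv(A) ≤ C(n,2) = n(n−1)/2; moreover the unique n×n square sign matrix with inv(A) = C(n,2) is the antidiagonal permutation matrix, i.e. the matrix with a_{ij} = 1 when i + j = n + 1 and a_{ij} = 0 otherwise. -/
/-- An `n × n` square sign matrix: a `{0, 1, -1}`-matrix whose rows and columns
all sum to 1, whose partial column sums lie in `{0, 1}`, and whose partial row
sums are nonnegative. -/
def IsSquareSign (n : ℕ) (A : Fin n → Fin n → ℤ) : Prop :=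
  (∀ i j, A i j = -1 ∨ A i j = 0 ∨ A i j = 1) ∧
  (∀ j, ∑ i, A i j = 1) ∧
  (∀ i, ∑ j, A i j = 1) ∧
  (∀ i j : Fin n, 0 ≤ ∑ i' ∈ Finset.Iic i, A i' j ∧ ∑ i' ∈ Finset.Iic i, A i' j ≤ 1) ∧
  (∀ i j : Fin n, 0 ≤ ∑ j' ∈ Finset.Iic j, A i j')

/-- An `n × n` magog matrix: a square sign matrix satisfying the
`(i,j)`-special inequalities (stated here with 0-based indices `i, j`,
corresponding to the paper's 1-based `i+1, j+1` with `1 ≤ i, j ≤ n-2`). -/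
def IsMagog (n : ℕ) (A : Fin n → Fin n → ℤ) : Prop :=
  IsSquareSign n A ∧
  ∀ (i j : ℕ) (hi : i + 2 < n) (hj : j + 2 < n),
    0 ≤ (∑ j' ∈ Finset.Iic (⟨j, by omega⟩ : Fin n), A ⟨i + 1, by omega⟩ j')
      + (∑ i' ∈ Finset.Iic (⟨i + 1, by omega⟩ : Fin n), A i' ⟨j + 1, by omega⟩)
      - (∑ i' ∈ Finset.Iic (⟨i, by omega⟩ : Fin n), A i' ⟨j, by omega⟩)

/-- The inversion number `inv(A) = ∑_{k<i} ∑_{j<l} a_{ij} a_{kl}`. -/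
def invNum (n : ℕ) (A : Fin n → Fin n → ℤ) : ℤ :=
  ∑ i : Fin n, ∑ j : Fin n, ∑ k : Fin n, ∑ l : Fin n,
    if k < i ∧ j < l then A i j * A k l else 0


open Finset

section Helpers

variable {n : ℕ}

lemma fin_Iio_insert (l : Fin n) (h : (l:ℕ) + 1 < n) :
    Finset.Iio (⟨(l:ℕ)+1, h⟩ : Fin n) = insert l (Finset.Iio l) := by
  ext x
  simp only [Finset.mem_Iio, Finset.mem_insert, Fin.lt_def, Fin.ext_iff]
  omega

lemma fin_Iic_eq_insert (l : Fin n) : Finset.Iic l = insert l (Finset.Iio l) :=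
  (Finset.Iio_insert l).symm

lemma fin_Iic_last (hn : 0 < n) (l : Fin n) (hl : (l:ℕ) = n - 1) :
    Finset.Iic l = Finset.univ := by
  ext x
  simp only [Finset.mem_Iic, Finset.mem_univ, iff_true, Fin.le_def]
  have := x.isLt
  omega

lemma fin_sum_Iio_add_Ici (f : Fin n → ℤ) (i : Fin n) :
    ∑ k ∈ Finset.Iio i, f k + ∑ k ∈ Finset.Ici i, f k = ∑ k, f k := by
  rw [← Finset.sum_union]
  · congr 1
    ext x
    simp only [Finset.mem_union, Finset.mem_Iio, Finset.mem_Ici, Finset.mem_univ, iff_true]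
    exact lt_or_ge x i
  · rw [Finset.disjoint_left]
    intro a ha hb
    exact absurd (Finset.mem_Iio.mp ha) (not_lt.mpr (Finset.mem_Ici.mp hb))

lemma fin_pair_count :
    ∑ j : Fin n, ∑ l : Fin n, (if j < l then (1:ℤ) else 0) = (n.choose 2 : ℤ) := by
  rw [Finset.sum_comm]
  have h1 : ∀ l : Fin n, ∑ j : Fin n, (if j < l then (1:ℤ) else 0) = ((l:ℕ) : ℤ) := by
    intro l
    rw [Finset.sum_boole]
    have : Finset.univ.filter (fun j => j < l) = Finset.Iio l := by
      ext x; simp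
    rw [this, Fin.card_Iio]
  rw [Finset.sum_congr rfl fun l _ => h1 l]
  rw [← Nat.cast_sum]
  congr 1
  rw [Fin.sum_univ_eq_sum_range (fun i => i), Finset.sum_range_id, Nat.choose_two_right]

end Helpers

lemma key_identity (n : ℕ) (A : Fin n → Fin n → ℤ) (hcol : ∀ j, ∑ i, A i j = 1) :
    invNum n A
      + ∑ i : Fin n, ∑ l : Fin n,
          (∑ j ∈ Finset.Iio l, A i j) * (∑ k ∈ Finset.Ici i, A k l)
      = (n.choose 2 : ℤ) := by
  -- expand choose as quadruple sum
  have hchoose : (n.choose 2 : ℤ)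
      = ∑ j : Fin n, ∑ l : Fin n, ∑ i : Fin n, ∑ k : Fin n,
          (if j < l then A i j * A k l else 0) := by
    have step : ∀ j l : Fin n, (if j < l then (1:ℤ) else 0)
        = ∑ i : Fin n, ∑ k : Fin n, (if j < l then A i j * A k l else 0) := by
      intro j l
      by_cases h : j < l
      · simp only [h, if_true]
        rw [← Finset.sum_mul_sum, hcol j, hcol l, one_mul]
      · simp [h]
    calc (n.choose 2 : ℤ)
        = ∑ j : Fin n, ∑ l : Fin n, (if j < l then (1:ℤ) else 0) := by
          rw [fin_pair_count]
      _ = _ := Finset.sum_congr rfl fun j _ => Finset.sum_congr rfl fun l _ => step j l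
  -- reorder
  have hreorder : (n.choose 2 : ℤ)
      = ∑ i : Fin n, ∑ j : Fin n, ∑ k : Fin n, ∑ l : Fin n,
          (if j < l then A i j * A k l else 0) := by
    rw [hchoose]
    calc ∑ j : Fin n, ∑ l : Fin n, ∑ i : Fin n, ∑ k : Fin n,
            (if j < l then A i j * A k l else 0)
        = ∑ j : Fin n, ∑ i : Fin n, ∑ l : Fin n, ∑ k : Fin n,
            (if j < l then A i j * A k l else 0) :=
          Finset.sum_congr rfl fun j _ => Finset.sum_comm
      _ = ∑ i : Fin n, ∑ j : Fin n, ∑ l : Fin n, ∑ k : Fin n,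
            (if j < l then A i j * A k l else 0) := Finset.sum_comm
      _ = ∑ i : Fin n, ∑ j : Fin n, ∑ k : Fin n, ∑ l : Fin n,
            (if j < l then A i j * A k l else 0) :=
          Finset.sum_congr rfl fun i _ => Finset.sum_congr rfl fun j _ => Finset.sum_comm
  -- second sum as quadruple sum
  have hS2 : ∑ i : Fin n, ∑ l : Fin n,
        (∑ j ∈ Finset.Iio l, A i j) * (∑ k ∈ Finset.Ici i, A k l)
      = ∑ i : Fin n, ∑ j : Fin n, ∑ k : Fin n, ∑ l : Fin n,
          (if i ≤ k ∧ j < l then A i j * A k l else 0) := by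
    apply Finset.sum_congr rfl
    intro i _
    have inner : ∀ l : Fin n,
        (∑ j ∈ Finset.Iio l, A i j) * (∑ k ∈ Finset.Ici i, A k l)
        = ∑ j : Fin n, ∑ k : Fin n, (if i ≤ k ∧ j < l then A i j * A k l else 0) := by
      intro l
      rw [Finset.sum_mul_sum]
      rw [← Finset.sum_subset (Finset.subset_univ (Finset.Iio l))]
      · apply Finset.sum_congr rfl
        intro j hj
        by_cases hjl : j < l
        · rw [← Finset.sum_subset (Finset.subset_univ (Finset.Ici i))]
          · apply Finset.sum_congr rfl
            intro k hk
            by_cases hik : i ≤ k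
            · simp [hjl, hik]
            · simp only [Finset.mem_Ici] at hk
              exact absurd hk hik
          · intro k _ hk
            simp only [Finset.mem_Ici] at hk
            simp [hk]
        · exact absurd (Finset.mem_Iio.mp ‹j ∈ Finset.Iio l›) hjl
      · intro j _ hj
        have : ¬ j < l := fun h => hj (Finset.mem_Iio.mpr h)
        apply Finset.sum_eq_zero
        intro k _
        simp [this]
    calc ∑ l : Fin n, (∑ j ∈ Finset.Iio l, A i j) * (∑ k ∈ Finset.Ici i, A k l)
        = ∑ l : Fin n, ∑ j : Fin n, ∑ k : Fin n,
            (if i ≤ k ∧ j < l then A i j * A k l else 0) :=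
          Finset.sum_congr rfl fun l _ => inner l
      _ = ∑ j : Fin n, ∑ l : Fin n, ∑ k : Fin n,
            (if i ≤ k ∧ j < l then A i j * A k l else 0) := Finset.sum_comm
      _ = ∑ j : Fin n, ∑ k : Fin n, ∑ l : Fin n,
            (if i ≤ k ∧ j < l then A i j * A k l else 0) :=
          Finset.sum_congr rfl fun j _ => Finset.sum_comm
  rw [hS2, hreorder, invNum]
  rw [← Finset.sum_add_distrib]
  apply Finset.sum_congr rfl; intro i _
  rw [← Finset.sum_add_distrib]
  apply Finset.sum_congr rfl; intro j _
  rw [← Finset.sum_add_distrib]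
  apply Finset.sum_congr rfl; intro k _
  rw [← Finset.sum_add_distrib]
  apply Finset.sum_congr rfl; intro l _
  by_cases h1 : k < i <;> by_cases h2 : j < l <;>
    simp [h1, h2, not_lt.mp, le_of_not_gt]

lemma rows_antidiag (n : ℕ) (hn : 0 < n) (A : Fin n → Fin n → ℤ)
    (h1 : ∀ i j, A i j = -1 ∨ A i j = 0 ∨ A i j = 1)
    (h2 : ∀ j, ∑ i, A i j = 1)
    (h3 : ∀ i, ∑ j, A i j = 1)
    (h4 : ∀ i j : Fin n, 0 ≤ ∑ i' ∈ Finset.Iic i, A i' j ∧ ∑ i' ∈ Finset.Iic i, A i' j ≤ 1)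
    (hzero : ∀ i l : Fin n,
      (∑ j ∈ Finset.Iio l, A i j) * (∑ k ∈ Finset.Ici i, A k l) = 0) :
    ∀ i j : Fin n, A i j = if (i:ℕ) + (j:ℕ) = n - 1 then 1 else 0 := by
  have main : ∀ m : ℕ, ∀ i : Fin n, (i : ℕ) = m →
      ∀ j : Fin n, A i j = if (i:ℕ) + (j:ℕ) = n - 1 then 1 else 0 := by
    intro m
    induction m using Nat.strong_induction_on with
    | _ m IH =>
      intro i him
      have hi := i.isLt
      -- column partial sums above row i
      have colsum : ∀ l : Fin n, ∑ k ∈ Finset.Iio i, A k l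
          = if n ≤ (i:ℕ) + (l:ℕ) then 1 else 0 := by
        intro l
        have hl := l.isLt
        have hstep : ∑ k ∈ Finset.Iio i, A k l
            = ∑ k ∈ Finset.Iio i, (if (k:ℕ) + (l:ℕ) = n - 1 then (1:ℤ) else 0) := by
          apply Finset.sum_congr rfl
          intro k hk
          have hk' : k < i := Finset.mem_Iio.mp hk
          exact IH (k:ℕ) (by omega) k rfl l
        rw [hstep]
        set c : Fin n := ⟨n - 1 - (l:ℕ), by omega⟩ with hc
        have hcond : ∀ k : Fin n, ((k:ℕ) + (l:ℕ) = n - 1) ↔ (k = c) := by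
          intro k
          have hk := k.isLt
          rw [Fin.ext_iff]
          simp only [hc]
          omega
        calc ∑ k ∈ Finset.Iio i, (if (k:ℕ) + (l:ℕ) = n - 1 then (1:ℤ) else 0)
            = ∑ k ∈ Finset.Iio i, (if k = c then (1:ℤ) else 0) := by
              apply Finset.sum_congr rfl
              intro k _
              rw [if_congr (hcond k) rfl rfl]
          _ = if c ∈ Finset.Iio i then (1:ℤ) else 0 :=
              Finset.sum_ite_eq' (Finset.Iio i) c (fun _ => (1:ℤ))
          _ = if n ≤ (i:ℕ) + (l:ℕ) then 1 else 0 := by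
              have : c ∈ Finset.Iio i ↔ n ≤ (i:ℕ) + (l:ℕ) := by
                rw [Finset.mem_Iio, Fin.lt_def]
                simp only [hc]
                omega
              by_cases h : n ≤ (i:ℕ) + (l:ℕ)
              · rw [if_pos h, if_pos (this.mpr h)]
              · rw [if_neg h, if_neg (fun hmem => h (this.mp hmem))]
      -- column suffix sums from row i
      have colsuf : ∀ l : Fin n, ∑ k ∈ Finset.Ici i, A k l
          = if n ≤ (i:ℕ) + (l:ℕ) then 0 else 1 := by
        intro l
        have hsplit := fin_sum_Iio_add_Ici (fun k => A k l) i
        rw [h2 l, colsum l] at hsplit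
        by_cases h : n ≤ (i:ℕ) + (l:ℕ)
        · rw [if_pos h] at hsplit ⊢; omega
        · rw [if_neg h] at hsplit ⊢; omega
      -- row prefix sums vanish left of the antidiagonal
      have prefix0 : ∀ l : Fin n, (i:ℕ) + (l:ℕ) < n → ∑ j ∈ Finset.Iio l, A i j = 0 := by
        intro l hl
        have hz := hzero i l
        rw [colsuf l, if_neg (by omega), mul_one] at hz
        exact hz
      -- the antidiagonal column for row i
      set r : Fin n := ⟨n - 1 - (i:ℕ), by omega⟩ with hrdef
      have hir : (i:ℕ) + (r:ℕ) = n - 1 := by simp only [hrdef]; omega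
      -- row prefix sum up to r equals the entry at r
      have hsr : ∑ j ∈ Finset.Iic r, A i j = A i r := by
        rw [fin_Iic_eq_insert, Finset.sum_insert (by simp),
          prefix0 r (by omega), add_zero]
      -- entries right of the antidiagonal are ≤ 0
      have hneg : ∀ l : Fin n, n ≤ (i:ℕ) + (l:ℕ) → A i l ≤ 0 := by
        intro l hl
        have hb := (h4 i l).2
        rw [fin_Iic_eq_insert, Finset.sum_insert (by simp), colsum l, if_pos hl] at hb
        omega
      -- downward: partial row sums are ≥ 1 from r on
      have sdown : ∀ m' : ℕ, ∀ l : Fin n, (l:ℕ) + m' = n - 1 → (r:ℕ) ≤ (l:ℕ) →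
          1 ≤ ∑ j ∈ Finset.Iic l, A i j := by
        intro m'
        induction m' with
        | zero =>
          intro l hl _
          rw [fin_Iic_last hn l (by omega), h3 i]
        | succ m' ih =>
          intro l hl hrl
          have hl1 : (l:ℕ) + 1 < n := by omega
          set l' : Fin n := ⟨(l:ℕ) + 1, hl1⟩ with hl'def
          have hIH : 1 ≤ ∑ j ∈ Finset.Iic l', A i j :=
            ih l' (by simp only [hl'def]; omega) (by simp only [hl'def]; omega)
          have hIioIic : Finset.Iio l' = Finset.Iic l := by
            ext x
            simp only [Finset.mem_Iio, Finset.mem_Iic, Fin.lt_def, Fin.le_def, hl'def]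
            omega
          have hsplit : ∑ j ∈ Finset.Iic l', A i j
              = A i l' + ∑ j ∈ Finset.Iic l, A i j := by
            rw [fin_Iic_eq_insert, hIioIic, Finset.sum_insert (by
              simp only [Finset.mem_Iic, Fin.le_def, hl'def]; omega)]
          have hb : A i l' ≤ 0 := hneg l' (by simp only [hl'def]; omega)
          omega
      -- the antidiagonal entry is 1
      have har : A i r = 1 := by
        have hd := sdown (n - 1 - (r:ℕ)) r (by omega) le_rfl
        rw [hsr] at hd
        rcases h1 i r with h | h | h <;> omega
      -- upward: partial row sums equal 1 from r on
      have sup : ∀ m' : ℕ, ∀ l : Fin n, (l:ℕ) = (r:ℕ) + m' →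
          ∑ j ∈ Finset.Iic l, A i j = 1 := by
        intro m'
        induction m' with
        | zero =>
          intro l hl
          have : l = r := Fin.ext (by omega)
          rw [this, hsr, har]
        | succ m' ih =>
          intro l hl
          have hl' := l.isLt
          have hl0 : (l:ℕ) - 1 < n := by omega
          set l0 : Fin n := ⟨(l:ℕ) - 1, hl0⟩ with hl0def
          have hIH : ∑ j ∈ Finset.Iic l0, A i j = 1 :=
            ih l0 (by simp only [hl0def]; omega)
          have hIioIic : Finset.Iio l = Finset.Iic l0 := by
            ext x
            simp only [Finset.mem_Iio, Finset.mem_Iic, Fin.lt_def, Fin.le_def, hl0def]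
            omega
          have hsplit : ∑ j ∈ Finset.Iic l, A i j
              = A i l + ∑ j ∈ Finset.Iic l0, A i j := by
            rw [fin_Iic_eq_insert, hIioIic, Finset.sum_insert (by
              simp only [Finset.mem_Iic, Fin.le_def, hl0def]; omega)]
          have hb : A i l ≤ 0 := hneg l (by simp only [hrdef] at hl ⊢; omega)
          have hd : 1 ≤ ∑ j ∈ Finset.Iic l, A i j :=
            sdown (n - 1 - (l:ℕ)) l (by omega) (by omega)
          omega
      -- conclude
      intro j
      have hj := j.isLt
      rcases lt_trichotomy ((i:ℕ) + (j:ℕ)) (n - 1) with hlt | heq | hgt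
      · rw [if_neg (by omega)]
        have hj1 : (j:ℕ) + 1 < n := by omega
        set j' : Fin n := ⟨(j:ℕ) + 1, hj1⟩ with hj'def
        have hp1 : ∑ x ∈ Finset.Iio j', A i x = 0 := prefix0 j' (by simp only [hj'def]; omega)
        have hp0 : ∑ x ∈ Finset.Iio j, A i x = 0 := prefix0 j (by omega)
        rw [fin_Iio_insert j hj1, Finset.sum_insert (by simp), hp0, add_zero] at hp1
        exact hp1
      · have : j = r := Fin.ext (by simp only [hrdef]; omega)
        rw [this, if_pos (by omega), har]
      · rw [if_neg (by omega)]
        have hl0 : (j:ℕ) - 1 < n := by omega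
        set j0 : Fin n := ⟨(j:ℕ) - 1, hl0⟩ with hj0def
        have hs1 : ∑ x ∈ Finset.Iic j, A i x = 1 :=
          sup ((j:ℕ) - (r:ℕ)) j (by simp only [hrdef] at *; omega)
        have hs0 : ∑ x ∈ Finset.Iic j0, A i x = 1 :=
          sup ((j0:ℕ) - (r:ℕ)) j0 (by simp only [hrdef, hj0def] at *; omega)
        have hIioIic : Finset.Iio j = Finset.Iic j0 := by
          ext x
          simp only [Finset.mem_Iio, Finset.mem_Iic, Fin.lt_def, Fin.le_def, hj0def]
          omega
        rw [fin_Iic_eq_insert, hIioIic, Finset.sum_insert (by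
          simp only [Finset.mem_Iic, Fin.le_def, hj0def]; omega), hs0] at hs1
        omega
  intro i j
  exact main (i:ℕ) i rfl j

lemma fin_Iio_as_Iic {n : ℕ} (i : Fin n) (h : 0 < (i:ℕ)) :
    Finset.Iio i = Finset.Iic (⟨(i:ℕ) - 1, by omega⟩ : Fin n) := by
  ext x
  simp only [Finset.mem_Iio, Finset.mem_Iic, Fin.lt_def, Fin.le_def]
  omega

lemma row_prefix_nonneg {n : ℕ} (A : Fin n → Fin n → ℤ)
    (h5 : ∀ i j : Fin n, 0 ≤ ∑ j' ∈ Finset.Iic j, A i j') (i l : Fin n) :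
    0 ≤ ∑ j ∈ Finset.Iio l, A i j := by
  rcases Nat.eq_zero_or_pos (l:ℕ) with h | h
  · have : Finset.Iio l = ∅ := by
      ext x; simp only [Finset.mem_Iio, Fin.lt_def, Finset.notMem_empty, iff_false]; omega
    simp [this]
  · rw [fin_Iio_as_Iic l h]
    exact h5 i _

lemma col_prefix_bounds {n : ℕ} (A : Fin n → Fin n → ℤ)
    (h4 : ∀ i j : Fin n, 0 ≤ ∑ i' ∈ Finset.Iic i, A i' j ∧ ∑ i' ∈ Finset.Iic i, A i' j ≤ 1)
    (i l : Fin n) :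
    0 ≤ ∑ k ∈ Finset.Iio i, A k l ∧ ∑ k ∈ Finset.Iio i, A k l ≤ 1 := by
  rcases Nat.eq_zero_or_pos (i:ℕ) with h | h
  · have : Finset.Iio i = ∅ := by
      ext x; simp only [Finset.mem_Iio, Fin.lt_def, Finset.notMem_empty, iff_false]; omega
    simp [this]
  · rw [fin_Iio_as_Iic i h]
    exact h4 _ l

lemma col_suffix_nonneg {n : ℕ} (A : Fin n → Fin n → ℤ)
    (h2 : ∀ j, ∑ i, A i j = 1)
    (h4 : ∀ i j : Fin n, 0 ≤ ∑ i' ∈ Finset.Iic i, A i' j ∧ ∑ i' ∈ Finset.Iic i, A i' j ≤ 1)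
    (i l : Fin n) :
    0 ≤ ∑ k ∈ Finset.Ici i, A k l := by
  have hsplit := fin_sum_Iio_add_Ici (fun k => A k l) i
  rw [h2 l] at hsplit
  have := (col_prefix_bounds A h4 i l).2
  omega

lemma antidiag_term_zero {n : ℕ} (hn : 0 < n) (i l : Fin n) :
    (∑ j ∈ Finset.Iio l, (if (i:ℕ) + (j:ℕ) = n - 1 then (1:ℤ) else 0))
      * (∑ k ∈ Finset.Ici i, (if (k:ℕ) + (l:ℕ) = n - 1 then (1:ℤ) else 0)) = 0 := by
  have hi := i.isLt
  have hl := l.isLt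
  set c1 : Fin n := ⟨n - 1 - (i:ℕ), by omega⟩ with hc1
  set c2 : Fin n := ⟨n - 1 - (l:ℕ), by omega⟩ with hc2
  have e1 : ∑ j ∈ Finset.Iio l, (if (i:ℕ) + (j:ℕ) = n - 1 then (1:ℤ) else 0)
      = if c1 ∈ Finset.Iio l then 1 else 0 := by
    rw [← Finset.sum_ite_eq' (Finset.Iio l) c1 (fun _ => (1:ℤ))]
    apply Finset.sum_congr rfl
    intro j _
    have hj := j.isLt
    apply if_congr _ rfl rfl
    rw [Fin.ext_iff]
    simp only [hc1]
    omega
  have e2 : ∑ k ∈ Finset.Ici i, (if (k:ℕ) + (l:ℕ) = n - 1 then (1:ℤ) else 0)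
      = if c2 ∈ Finset.Ici i then 1 else 0 := by
    rw [← Finset.sum_ite_eq' (Finset.Ici i) c2 (fun _ => (1:ℤ))]
    apply Finset.sum_congr rfl
    intro k _
    have hk := k.isLt
    apply if_congr _ rfl rfl
    rw [Fin.ext_iff]
    simp only [hc2]
    omega
  rw [e1, e2]
  by_cases hm1 : c1 ∈ Finset.Iio l
  · by_cases hm2 : c2 ∈ Finset.Ici i
    · exfalso
      rw [Finset.mem_Iio, Fin.lt_def] at hm1
      rw [Finset.mem_Ici, Fin.le_def] at hm2
      simp only [hc1] at hm1
      simp only [hc2] at hm2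
      omega
    · rw [if_neg hm2, mul_zero]
  · rw [if_neg hm1, zero_mul]


/-- Every `n × n` square sign matrix has inversion number at most `C(n,2)`, and
the unique square sign matrix attaining this bound is the antidiagonal
permutation matrix. -/
theorem invNum_le_and_eq_iff_antidiagonal (n : ℕ) (hn : 0 < n) :
    (∀ A : Fin n → Fin n → ℤ, IsSquareSign n A → invNum n A ≤ (n.choose 2 : ℤ)) ∧
    (∀ A : Fin n → Fin n → ℤ, IsSquareSign n A →
      (invNum n A = (n.choose 2 : ℤ) ↔
        A = fun (i j : Fin n) => if (i : ℕ) + (j : ℕ) = n - 1 then (1 : ℤ) else 0)) := by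
  have hterm_nonneg : ∀ A : Fin n → Fin n → ℤ, IsSquareSign n A → ∀ i l : Fin n,
      0 ≤ (∑ j ∈ Finset.Iio l, A i j) * (∑ k ∈ Finset.Ici i, A k l) := by
    intro A hA i l
    obtain ⟨h1, h2, h3, h4, h5⟩ := hA
    exact mul_nonneg (row_prefix_nonneg A h5 i l) (col_suffix_nonneg A h2 h4 i l)
  have hS_nonneg : ∀ A : Fin n → Fin n → ℤ, IsSquareSign n A →
      0 ≤ ∑ i : Fin n, ∑ l : Fin n,
        (∑ j ∈ Finset.Iio l, A i j) * (∑ k ∈ Finset.Ici i, A k l) :=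
    fun A hA => Finset.sum_nonneg fun i _ => Finset.sum_nonneg fun l _ =>
      hterm_nonneg A hA i l
  constructor
  · intro A hA
    have hid := key_identity n A hA.2.1
    have := hS_nonneg A hA
    omega
  · intro A hA
    constructor
    · intro heq
      have hid := key_identity n A hA.2.1
      have hS0 : ∑ i : Fin n, ∑ l : Fin n,
          (∑ j ∈ Finset.Iio l, A i j) * (∑ k ∈ Finset.Ici i, A k l) = 0 := by omega
      have hzero : ∀ i l : Fin n,
          (∑ j ∈ Finset.Iio l, A i j) * (∑ k ∈ Finset.Ici i, A k l) = 0 := by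
        intro i l
        have houter := (Finset.sum_eq_zero_iff_of_nonneg
          (fun i _ => Finset.sum_nonneg fun l _ => hterm_nonneg A hA i l)).mp hS0
        have hinner := (Finset.sum_eq_zero_iff_of_nonneg
          (fun l _ => hterm_nonneg A hA i l)).mp (houter i (Finset.mem_univ i))
        exact hinner l (Finset.mem_univ l)
      obtain ⟨h1, h2, h3, h4, h5⟩ := hA
      funext i j
      exact rows_antidiag n hn A h1 h2 h3 h4 hzero i j
    · intro hAeq
      have hid := key_identity n A hA.2.1
      have hS0 : ∑ i : Fin n, ∑ l : Fin n,
          (∑ j ∈ Finset.Iio l, A i j) * (∑ k ∈ Finset.Ici i, A k l) = 0 := by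
        apply Finset.sum_eq_zero
        intro i _
        apply Finset.sum_eq_zero
        intro l _
        rw [hAeq]
        exact antidiag_term_zero hn i l
      omega
end

section
/- For every n ≥ 2, the number of n×n magog matrices with positive inversion number equal to C(n,2) − 1 = n(n−1)/2 − 1 is exactly n − 1. -/
/-- The number of entries of `A` equal to `-1`. -/
def negCount (n : ℕ) (A : Fin n → Fin n → ℤ) : ℕ :=
  (Finset.univ.filter (fun p : Fin n × Fin n => A p.1 p.2 = -1)).card

/-- The positive inversion number `posinv(A) = inv(A) - N(A)`, where `N(A)` is
the number of `-1` entries of `A`. -/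
def posInvNum (n : ℕ) (A : Fin n → Fin n → ℤ) : ℤ :=
  invNum n A - (negCount n A : ℤ)


namespace MagogAux
open Finset

variable {n : ℕ}

/-- partial row sum strictly left of column `l` -/
def Rp (A : Fin n → Fin n → ℤ) (i l : Fin n) : ℤ := ∑ j ∈ Finset.Iio l, A i j
/-- partial column sum strictly above row `i` -/
def Cp (A : Fin n → Fin n → ℤ) (i l : Fin n) : ℤ := ∑ k ∈ Finset.Iio i, A k l
def Tlj (A : Fin n → Fin n → ℤ) (l j : Fin n) : ℤ := ∑ k, A k l * ∑ i ∈ Finset.Iic k, A i j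
def W (A : Fin n → Fin n → ℤ) : ℤ := ∑ l, ∑ j ∈ Finset.Iio l, Tlj A l j

lemma sum_Iio_add_sum_Ici (a : Fin n) (f : Fin n → ℤ) :
    ∑ k ∈ Finset.Iio a, f k + ∑ k ∈ Finset.Ici a, f k = ∑ k, f k := by
  rw [← Finset.sum_union (by simp [Finset.disjoint_left])]
  congr 1; ext x; simp [lt_or_ge]

lemma sum_Iic_comm (F : Fin n → Fin n → ℤ) :
    ∑ i, ∑ k ∈ Finset.Iic i, F i k = ∑ k, ∑ i ∈ Finset.Ici k, F i k := by
  have h1 : ∀ i : Fin n, Finset.Iic i = Finset.univ.filter (fun k => k ≤ i) := by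
    intro i; ext x; simp
  have h2 : ∀ k : Fin n, Finset.Ici k = Finset.univ.filter (fun i => k ≤ i) := by
    intro k; ext x; simp
  simp_rw [h1, h2, Finset.sum_filter]
  exact Finset.sum_comm

lemma sum_Iio_comm (F : Fin n → Fin n → ℤ) :
    ∑ j, ∑ l ∈ Finset.Ioi j, F j l = ∑ l, ∑ j ∈ Finset.Iio l, F j l := by
  have h1 : ∀ j : Fin n, Finset.Ioi j = Finset.univ.filter (fun l => j < l) := by
    intro i; ext x; simp
  have h2 : ∀ l : Fin n, Finset.Iio l = Finset.univ.filter (fun j => j < l) := by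
    intro k; ext x; simp
  simp_rw [h1, h2, Finset.sum_filter]
  exact Finset.sum_comm

lemma pair_identity (f g : Fin n → ℤ) (hf : ∑ i, f i = 1) (hg : ∑ i, g i = 1) :
    ∑ i, ∑ k ∈ Finset.Iio i, f i * g k = 1 - ∑ k, g k * ∑ i ∈ Finset.Iic k, f i := by
  have key : (∑ i, ∑ k ∈ Finset.Iio i, f i * g k)
      + (∑ k, g k * ∑ i ∈ Finset.Iic k, f i) = 1 := by
    have h1 : ∀ i : Fin n, ∑ k ∈ Finset.Iio i, f i * g k
        = ∑ k, if k < i then f i * g k else 0 := by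
      intro i
      rw [show Finset.Iio i = Finset.univ.filter (fun k => k < i) by ext x; simp,
        Finset.sum_filter]
    have h2 : ∀ k : Fin n, g k * ∑ i ∈ Finset.Iic k, f i
        = ∑ i, if i ≤ k then f i * g k else 0 := by
      intro k
      rw [Finset.mul_sum, show Finset.Iic k = Finset.univ.filter (fun i => i ≤ k) by
        ext x; simp, Finset.sum_filter]
      apply Finset.sum_congr rfl; intro x _; split <;> ring
    simp_rw [h1, h2]
    rw [Finset.sum_comm (f := fun k i => if i ≤ k then f i * g k else 0), ← Finset.sum_add_distrib]
    have : ∀ i : Fin n, ((∑ k, if k < i then f i * g k else 0)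
        + ∑ k, if i ≤ k then f i * g k else 0) = ∑ k, f i * g k := by
      intro i
      rw [← Finset.sum_add_distrib]
      apply Finset.sum_congr rfl; intro k _
      rcases lt_or_ge k i with h | h
      · simp [h, not_le.2 h]
      · simp [h, not_lt.2 h]
    simp_rw [this, ← Finset.mul_sum, ← Finset.sum_mul, hf, hg, one_mul]
  linarith

lemma sum_val : (∑ l : Fin n, (l.val : ℤ)) = (n.choose 2 : ℤ) := by
  rw [Fin.sum_univ_eq_sum_range, Nat.choose_two_right]
  push_cast [← Finset.sum_range_id n]
  ring

lemma invNum_eq (A : Fin n → Fin n → ℤ) (hA : IsSquareSign n A) :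
    invNum n A = (n.choose 2 : ℤ) - W A := by
  obtain ⟨h01, hcol, hrow, hcolp, hrowp⟩ := hA
  have step1 : invNum n A = ∑ j, ∑ l ∈ Finset.Ioi j, (1 - Tlj A l j) := by
    rw [invNum]
    rw [Finset.sum_comm]
    apply Finset.sum_congr rfl; intro j _
    have inner : ∀ i : Fin n, ∑ k : Fin n, ∑ l : Fin n,
        (if k < i ∧ j < l then A i j * A k l else 0)
        = ∑ l ∈ Finset.Ioi j, ∑ k ∈ Finset.Iio i, A i j * A k l := by
      intro i
      rw [Finset.sum_comm]
      rw [show Finset.Ioi j = Finset.univ.filter (fun l => j < l) by ext x; simp,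
        Finset.sum_filter]
      apply Finset.sum_congr rfl; intro l _
      rw [show Finset.Iio i = Finset.univ.filter (fun k => k < i) by ext x; simp,
        Finset.sum_filter]
      split
      · apply Finset.sum_congr rfl; intro k _
        simp_all
      · apply Finset.sum_eq_zero; intro k _; simp_all
    simp_rw [inner]
    rw [Finset.sum_comm]
    apply Finset.sum_congr rfl; intro l hl
    have := pair_identity (fun i => A i j) (fun k => A k l) (hcol j) (hcol l)
    simpa [Tlj] using this
  rw [step1]
  simp_rw [Finset.sum_sub_distrib]
  congr 1
  · rw [← sum_val (n := n)]
    rw [sum_Iio_comm (F := fun j l => (1:ℤ))]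
    apply Finset.sum_congr rfl; intro l _
    simp
  · rw [sum_Iio_comm (F := fun j l => Tlj A l j), W]


lemma Iio_cases (l : Fin n) : Finset.Iio l = ∅ ∨
    ∃ m : Fin n, m.val + 1 = l.val ∧ Finset.Iio l = Finset.Iic m := by
  rcases Nat.eq_zero_or_pos l.val with h | h
  · left; ext x; simp [Fin.lt_def, h]
  · right
    refine ⟨⟨l.val - 1, by omega⟩, by simp only []; omega, ?_⟩
    ext x
    simp only [Finset.mem_Iio, Finset.mem_Iic, Fin.lt_def, Fin.le_def]
    omega

variable {A : Fin n → Fin n → ℤ}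

lemma Rp_nonneg (hA : IsSquareSign n A) (i l : Fin n) : 0 ≤ Rp A i l := by
  rw [Rp]
  rcases Iio_cases l with h | ⟨m, _, h⟩ <;> rw [h]
  · simp
  · exact hA.2.2.2.2 i m

lemma Cp_nonneg (hA : IsSquareSign n A) (i l : Fin n) : 0 ≤ Cp A i l := by
  rw [Cp]
  rcases Iio_cases i with h | ⟨m, _, h⟩ <;> rw [h]
  · simp
  · exact (hA.2.2.2.1 m l).1

lemma Cp_le_one (hA : IsSquareSign n A) (i l : Fin n) : Cp A i l ≤ 1 := by
  rw [Cp]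
  rcases Iio_cases i with h | ⟨m, _, h⟩ <;> rw [h]
  · simp
  · exact (hA.2.2.2.1 m l).2

lemma U_eq (hA : IsSquareSign n A) (l : Fin n) :
    ∑ j ∈ Finset.Iio l, Tlj A l j = ∑ i, Rp A i l * (1 - Cp A i l) := by
  have h1 : ∑ j ∈ Finset.Iio l, Tlj A l j
      = ∑ k, A k l * ∑ i ∈ Finset.Iic k, Rp A i l := by
    simp_rw [Tlj]
    rw [Finset.sum_comm]
    apply Finset.sum_congr rfl; intro k _
    rw [← Finset.mul_sum, Finset.sum_comm]
    simp_rw [Rp]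
  rw [h1]
  simp_rw [Finset.mul_sum]
  rw [sum_Iic_comm (F := fun k i => A k l * Rp A i l)]
  apply Finset.sum_congr rfl; intro i _
  have hsplit := sum_Iio_add_sum_Ici i (fun k => A k l)
  have hcol := hA.2.1 l
  have : ∑ k ∈ Finset.Ici i, A k l = 1 - Cp A i l := by
    rw [Cp]; omega
  rw [← Finset.sum_mul, this]; ring

lemma U_nonneg (hA : IsSquareSign n A) (l : Fin n) :
    0 ≤ ∑ j ∈ Finset.Iio l, Tlj A l j := by
  rw [U_eq hA]
  apply Finset.sum_nonneg
  intro i _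
  have h1 := Rp_nonneg hA i l
  have h2 := Cp_le_one hA i l
  nlinarith

lemma W_nonneg (hA : IsSquareSign n A) : 0 ≤ W A :=
  Finset.sum_nonneg fun l _ => U_nonneg hA l


/-- the permutation (column `j` has its 1 in row `tau n k j`) -/
def tau (n k j : ℕ) : ℕ :=
  if j = k then n - 2 - k else if j = k + 1 then n - 1 - k else n - 1 - j

def Mmat (n k : ℕ) : Fin n → Fin n → ℤ := fun i j =>
  if i.val = tau n k j.val then 1 else 0

lemma tau_lt (hn : 0 < n) (k : ℕ) {j : ℕ} (hj : j < n) : tau n k j < n := by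
  rw [tau]; split_ifs <;> omega

lemma tau_inj {k : ℕ} (hk : k + 1 < n) {j₁ j₂ : ℕ} (h1 : j₁ < n) (h2 : j₂ < n)
    (h : tau n k j₁ = tau n k j₂) : j₁ = j₂ := by
  rw [tau, tau] at h; split_ifs at h <;> omega

lemma cond_eq (m : ℕ) (hm : m < n) (i' : Fin n) (x : ℤ) :
    (if i'.val = m then x else 0) = (if i' = (⟨m, hm⟩ : Fin n) then x else 0) := by
  by_cases h : i'.val = m
  · rw [if_pos h, if_pos (Fin.ext h)]
  · rw [if_neg h, if_neg (fun hc => h (by rw [hc]))]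

lemma sum_ind_Iic (m : ℕ) (hm : m < n) (i : Fin n) :
    ∑ i' ∈ Finset.Iic i, (if i'.val = m then (1:ℤ) else 0) = if m ≤ i.val then 1 else 0 := by
  rw [Finset.sum_congr rfl (fun i' _ => by rw [cond_eq m hm i' 1])]
  rw [Finset.sum_ite_eq' (Finset.Iic i) (⟨m, hm⟩ : Fin n) (fun _ => (1:ℤ))]
  simp [Finset.mem_Iic, Fin.le_def]

lemma sum_ind_univ (m : ℕ) (hm : m < n) :
    ∑ i' : Fin n, (if i'.val = m then (1:ℤ) else 0) = 1 := by
  rw [Finset.sum_congr rfl (fun i' _ => by rw [cond_eq m hm i' 1])]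
  rw [Finset.sum_ite_eq' Finset.univ (⟨m, hm⟩ : Fin n) (fun _ => (1:ℤ))]
  simp

lemma sum_ind_mul (m : ℕ) (hm : m < n) (f : Fin n → ℤ) :
    ∑ i' : Fin n, (if i'.val = m then (1:ℤ) else 0) * f i' = f ⟨m, hm⟩ := by
  rw [Finset.sum_congr rfl (fun i' _ => by rw [cond_eq m hm i' 1])]
  simp [Finset.sum_ite_eq]

lemma sum_ind_Iio (m : ℕ) (hm : m < n) (l : Fin n) :
    ∑ j ∈ Finset.Iio l, (if j.val = m then (1:ℤ) else 0) = if m < l.val then 1 else 0 := by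
  rw [Finset.sum_congr rfl (fun i' _ => by rw [cond_eq m hm i' 1])]
  rw [Finset.sum_ite_eq' (Finset.Iio l) (⟨m, hm⟩ : Fin n) (fun _ => (1:ℤ))]
  simp [Finset.mem_Iio, Fin.lt_def]

section Family
variable {k : ℕ}

lemma Mmat_colsum (hn : 0 < n) (k : ℕ) (j : Fin n) : ∑ i, Mmat n k i j = 1 :=
  sum_ind_univ _ (tau_lt hn k j.isLt)

lemma Mmat_colpartial (k : ℕ) (i j : Fin n) :
    ∑ i' ∈ Finset.Iic i, Mmat n k i' j
      = if tau n k j.val ≤ i.val then 1 else 0 := by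
  have hn : 0 < n := Fin.pos i
  exact sum_ind_Iic _ (tau_lt hn k j.isLt) i

def T (hn : 0 < n) (k : ℕ) : Fin n → Fin n := fun j => ⟨tau n k j.val, tau_lt hn k j.isLt⟩

lemma T_bij (hk : k + 1 < n) : Function.Bijective (T (by omega : 0 < n) k) := by
  rw [Function.Bijective]
  have hinj : Function.Injective (T (by omega : 0 < n) k) := by
    intro a b hab
    exact Fin.ext (tau_inj hk a.isLt b.isLt (congrArg Fin.val hab))
  exact ⟨hinj, Finite.surjective_of_injective hinj⟩

lemma Mmat_rowsum (hk : k + 1 < n) (i : Fin n) : ∑ j, Mmat n k i j = 1 := by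
  have hn : 0 < n := by omega
  have : ∀ j : Fin n, Mmat n k i j = if T hn k j = i then 1 else 0 := by
    intro j
    rw [Mmat, T]
    by_cases h : i.val = tau n k j.val
    · rw [if_pos h, if_pos (Fin.ext h.symm)]
    · rw [if_neg h, if_neg (fun hc => h (congrArg Fin.val hc).symm)]
  simp_rw [this]
  rw [Function.Bijective.sum_comp (T_bij hk) (fun m => if m = i then (1:ℤ) else 0)]
  simp

lemma Mmat_squareSign (hk : k + 1 < n) : IsSquareSign n (Mmat n k) := by
  have hn : 0 < n := by omega
  refine ⟨?_, Mmat_colsum hn k, Mmat_rowsum hk, ?_, ?_⟩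
  · intro i j; rw [Mmat]; split
    · right; right; rfl
    · right; left; rfl
  · intro i j
    rw [Mmat_colpartial]
    constructor <;> split <;> norm_num
  · intro i j
    apply Finset.sum_nonneg
    intro x _; rw [Mmat]; split <;> norm_num

lemma tau_succ_le (hk : k + 1 < n) {j : ℕ} (hj : j + 1 < n) :
    tau n k (j + 1) ≤ tau n k j + 1 := by
  rw [tau, tau]; split_ifs <;> omega

lemma Mmat_magog (hk : k + 1 < n) : IsMagog n (Mmat n k) := by
  refine ⟨Mmat_squareSign hk, ?_⟩
  intro i j hi hj
  have hR : 0 ≤ ∑ j' ∈ Finset.Iic (⟨j, by omega⟩ : Fin n), Mmat n k ⟨i + 1, by omega⟩ j' := by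
    apply Finset.sum_nonneg; intro x _; rw [Mmat]; split <;> norm_num
  have hC2 : ∑ i' ∈ Finset.Iic (⟨i + 1, by omega⟩ : Fin n), Mmat n k i' ⟨j + 1, by omega⟩
      = if tau n k (j+1) ≤ i + 1 then 1 else 0 := Mmat_colpartial k _ _
  have hC1 : ∑ i' ∈ Finset.Iic (⟨i, by omega⟩ : Fin n), Mmat n k i' ⟨j, by omega⟩
      = if tau n k j ≤ i then 1 else 0 := Mmat_colpartial k _ _
  rw [hC2, hC1]
  have := tau_succ_le hk (by omega : j + 1 < n)
  split_ifs <;> linarith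

lemma Mmat_negCount (k : ℕ) : negCount n (Mmat n k) = 0 := by
  rw [negCount, Finset.card_eq_zero, Finset.filter_eq_empty_iff]
  intro p _
  rw [Mmat]; split <;> norm_num

lemma Tlj_Mmat (hk : k + 1 < n) (l j : Fin n) :
    Tlj (Mmat n k) l j = if tau n k j.val ≤ tau n k l.val then 1 else 0 := by
  have hn : 0 < n := by omega
  rw [Tlj]
  simp_rw [Mmat_colpartial k]
  have : ∀ kk : Fin n, Mmat n k kk l * (if tau n k j.val ≤ kk.val then (1:ℤ) else 0)
      = (if kk.val = tau n k l.val then (1:ℤ) else 0)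
        * (if tau n k j.val ≤ kk.val then (1:ℤ) else 0) := fun kk => by rw [Mmat]
  simp_rw [this]
  rw [sum_ind_mul _ (tau_lt hn k l.isLt)]

lemma W_Mmat (hk : k + 1 < n) : W (Mmat n k) = 1 := by
  have hn : 0 < n := by omega
  rw [W]
  have inner : ∀ l : Fin n, ∑ j ∈ Finset.Iio l, Tlj (Mmat n k) l j
      = if l.val = k + 1 then 1 else 0 := by
    intro l
    simp_rw [Tlj_Mmat hk]
    by_cases hl : l.val = k + 1
    · rw [if_pos hl]
      have : ∀ j ∈ Finset.Iio l, (if tau n k j.val ≤ tau n k l.val then (1:ℤ) else 0)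
          = if j.val = k then 1 else 0 := by
        intro j hj
        have hjl : j.val < l.val := Fin.lt_def.mp (Finset.mem_Iio.mp hj)
        have : (tau n k j.val ≤ tau n k l.val) ↔ (j.val = k) := by
          rw [tau, tau]
          have hjn := j.isLt
          split_ifs <;> omega
        by_cases hc : j.val = k
        · rw [if_pos (this.2 hc), if_pos hc]
        · rw [if_neg (fun hc2 => hc (this.1 hc2)), if_neg hc]
      rw [Finset.sum_congr rfl this, sum_ind_Iio k (by omega) l, if_pos (by omega)]
    · rw [if_neg hl]
      apply Finset.sum_eq_zero
      intro j hj
      have hjl : j.val < l.val := Fin.lt_def.mp (Finset.mem_Iio.mp hj)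
      have hln := l.isLt
      have hjn := j.isLt
      rw [if_neg]
      rw [tau, tau]
      split_ifs <;> omega
  simp_rw [inner]
  exact sum_ind_univ (k+1) hk

lemma posInv_Mmat (hk : k + 1 < n) : posInvNum n (Mmat n k) = (n.choose 2 : ℤ) - 1 := by
  rw [posInvNum, invNum_eq _ (Mmat_squareSign hk), W_Mmat hk, Mmat_negCount]
  simp

end Family


section Unique
variable {A : Fin n → Fin n → ℤ}

lemma sum_Iic_split (a : Fin n) (f : Fin n → ℤ) :
    ∑ x ∈ Finset.Iic a, f x = ∑ x ∈ Finset.Iio a, f x + f a := by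
  rw [← Finset.Iio_insert, Finset.sum_insert (by simp)]; ring

lemma exists_pos_of_one_le {s : Finset (Fin n)} {f : Fin n → ℤ} (h : 1 ≤ ∑ x ∈ s, f x) :
    ∃ x ∈ s, 0 < f x := by
  by_contra hc; push_neg at hc
  have := Finset.sum_nonpos hc; omega

lemma eq_one_of_pos (hA : IsSquareSign n A) {i j : Fin n} (h : 0 < A i j) : A i j = 1 := by
  rcases hA.1 i j with h' | h' | h' <;> omega

lemma two_ones_col (hA : IsSquareSign n A) {c i1 i2 : Fin n} (hne : i1 ≠ i2)
    (hnonneg : ∀ i, 0 ≤ A i c) (h1 : A i1 c = 1) (h2 : A i2 c = 1) : False := by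
  have hcol := hA.2.1 c
  have hle : A i1 c + A i2 c ≤ ∑ i, A i c := by
    rw [← Finset.sum_pair (f := fun x => A x c) hne]
    exact Finset.sum_le_sum_of_subset_of_nonneg (by simp) (fun i _ _ => hnonneg i)
  omega

lemma two_ones_row (hA : IsSquareSign n A) {r j1 j2 : Fin n} (hne : j1 ≠ j2)
    (hnonneg : ∀ j, 0 ≤ A r j) (h1 : A r j1 = 1) (h2 : A r j2 = 1) : False := by
  have hrow := hA.2.2.1 r
  have hle : A r j1 + A r j2 ≤ ∑ j, A r j := by
    rw [← Finset.sum_pair (f := fun x => A r x) hne]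
    exact Finset.sum_le_sum_of_subset_of_nonneg (by simp) (fun j _ _ => hnonneg j)
  omega

lemma key_zero (hA : IsSquareSign n A) (hW : W A = 0) (l i : Fin n) :
    Rp A i l = 0 ∨ Cp A i l = 1 := by
  have hU : ∑ j ∈ Finset.Iio l, Tlj A l j = 0 :=
    (Finset.sum_eq_zero_iff_of_nonneg (fun l' _ => U_nonneg hA l')).1 hW l (Finset.mem_univ l)
  rw [U_eq hA] at hU
  have hterm : Rp A i l * (1 - Cp A i l) = 0 := by
    refine (Finset.sum_eq_zero_iff_of_nonneg ?_).1 hU i (Finset.mem_univ i)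
    intro x _
    have h1 := Rp_nonneg hA x l
    have h2 := Cp_le_one hA x l
    nlinarith
  rcases mul_eq_zero.1 hterm with h | h
  · left; exact h
  · right; linarith

lemma no_N1 (hA : IsSquareSign n A) (hW : W A = 0) (hN : negCount n A = 1) : False := by
  obtain ⟨p0, hp0⟩ := Finset.card_eq_one.1 hN
  obtain ⟨q, l0⟩ := p0
  have hneg : A q l0 = -1 := by
    have hmem : (q, l0) ∈ Finset.univ.filter (fun p : Fin n × Fin n => A p.1 p.2 = -1) := by
      rw [hp0]; simp
    simpa using hmem
  have hnn : ∀ i j : Fin n, ¬(i = q ∧ j = l0) → 0 ≤ A i j := by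
    intro i j hij
    rcases hA.1 i j with h | h | h
    · exfalso
      have hmem : (i, j) ∈ Finset.univ.filter (fun p : Fin n × Fin n => A p.1 p.2 = -1) := by
        simp [h]
      rw [hp0, Finset.mem_singleton, Prod.ext_iff] at hmem
      exact hij hmem
    · omega
    · omega
  -- a `1` in row `q` left of `l0`
  have hrow_partial := hA.2.2.2.2 q l0
  have hRp1 : 1 ≤ Rp A q l0 := by
    rw [Rp]
    have hsplit : ∑ x ∈ Finset.Iic l0, A q x = ∑ x ∈ Finset.Iio l0, A q x + A q l0 :=
      sum_Iic_split l0 _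
    omega
  obtain ⟨j1, hj1mem, hj1pos⟩ := exists_pos_of_one_le hRp1
  have hj1l0 : j1 < l0 := Finset.mem_Iio.1 hj1mem
  have hj1 : A q j1 = 1 := eq_one_of_pos hA hj1pos
  -- a second `1` in row `q`
  have hrow := hA.2.2.1 q
  have hj1ne : j1 ≠ l0 := ne_of_lt hj1l0
  have hsum2 : 1 ≤ ∑ j ∈ (Finset.univ.erase l0).erase j1, A q j := by
    have e1 : A q l0 + ∑ j ∈ Finset.univ.erase l0, A q j = ∑ j, A q j :=
      Finset.add_sum_erase Finset.univ (fun j => A q j) (Finset.mem_univ l0)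
    have e2 : A q j1 + ∑ j ∈ (Finset.univ.erase l0).erase j1, A q j
        = ∑ j ∈ Finset.univ.erase l0, A q j :=
      Finset.add_sum_erase (Finset.univ.erase l0) (fun j => A q j)
        (Finset.mem_erase.2 ⟨hj1ne, Finset.mem_univ j1⟩)
    omega
  obtain ⟨j2, hj2mem, hj2pos⟩ := exists_pos_of_one_le hsum2
  have hj2 : A q j2 = 1 := eq_one_of_pos hA hj2pos
  have hj2j1 : j2 ≠ j1 := (Finset.mem_erase.1 hj2mem).1
  have hj2l0 : j2 ≠ l0 := (Finset.mem_erase.1 (Finset.mem_erase.1 hj2mem).2).1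
  -- common final contradiction
  have final : ∀ ja jb : Fin n, ja < jb → jb ≠ l0
      → A q ja = 1 → A q jb = 1 → (∀ j, j ∈ Finset.Iio jb → 0 ≤ A q j) → False := by
    intro ja jb hab hbne ha hb hnnrow
    have hRp : 1 ≤ Rp A q jb := by
      rw [Rp]
      have hs : A q ja ≤ ∑ j ∈ Finset.Iio jb, A q j :=
        Finset.single_le_sum hnnrow (Finset.mem_Iio.2 hab)
      omega
    have hCp : Cp A q jb = 1 := by
      rcases key_zero hA hW jb q with h | h
      · omega
      · exact h
    have hCp' : 1 ≤ ∑ k ∈ Finset.Iio q, A k jb := by rw [Cp] at hCp; omega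
    obtain ⟨i2, hi2mem, hi2pos⟩ := exists_pos_of_one_le hCp'
    have hi2q : i2 < q := Finset.mem_Iio.1 hi2mem
    exact two_ones_col hA (ne_of_lt hi2q)
      (fun i => hnn i jb (fun hc => hbne hc.2))
      (eq_one_of_pos hA hi2pos) hb
  rcases lt_or_gt_of_ne hj2l0 with hcase | hcase
  · -- j2 < l0 : two ones left of l0
    have hnnrow : ∀ jb : Fin n, jb < l0 → ∀ j ∈ Finset.Iio jb, 0 ≤ A q j := by
      intro jb hjb j hj
      apply hnn q j
      rintro ⟨-, rfl⟩
      exact absurd ((Finset.mem_Iio.1 hj).trans hjb) (lt_irrefl _)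
    rcases lt_or_gt_of_ne hj2j1 with hlt | hlt
    · exact final j2 j1 hlt hj1ne hj2 hj1 (hnnrow j1 hj1l0)
    · exact final j1 j2 hlt hj2l0 hj1 hj2 (hnnrow j2 hcase)
  · -- l0 < j2 : find the `1` above the `-1` in column l0
    have hcolp := (hA.2.2.2.1 q l0).1
    have hCp1 : 1 ≤ Cp A q l0 := by
      rw [Cp]
      have hsplit : ∑ x ∈ Finset.Iic q, A x l0 = ∑ x ∈ Finset.Iio q, A x l0 + A q l0 :=
        sum_Iic_split q _
      omega
    obtain ⟨p1, hp1mem, hp1pos⟩ := exists_pos_of_one_le hCp1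
    have hp1q : p1 < q := Finset.mem_Iio.1 hp1mem
    have hp1 : A p1 l0 = 1 := eq_one_of_pos hA hp1pos
    have hRp : 1 ≤ Rp A p1 j2 := by
      rw [Rp]
      have hmono : A p1 l0 ≤ ∑ j ∈ Finset.Iio j2, A p1 j :=
        Finset.single_le_sum
          (fun j _ => hnn p1 j (fun hc => absurd hc.1 (ne_of_lt hp1q))) (Finset.mem_Iio.2 hcase)
      omega
    have hCp : Cp A p1 j2 = 1 := by
      rcases key_zero hA hW j2 p1 with h | h
      · omega
      · exact h
    have hCp' : 1 ≤ ∑ k ∈ Finset.Iio p1, A k j2 := by rw [Cp] at hCp; omega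
    obtain ⟨i2, hi2mem, hi2pos⟩ := exists_pos_of_one_le hCp'
    have hi2p1 : i2 < p1 := Finset.mem_Iio.1 hi2mem
    exact two_ones_col hA (ne_of_lt (hi2p1.trans hp1q))
      (fun i => hnn i j2 (fun hc => hj2l0 hc.2))
      (eq_one_of_pos hA hi2pos) hj2

end Unique


section Classify
variable {A : Fin n → Fin n → ℤ}

lemma rev_of_strictAnti {s : Fin n → Fin n} (hs : ∀ a b : Fin n, a < b → s b < s a)
    (j : Fin n) : (s j).val = n - 1 - j.val := by
  have hinj : Function.Injective s := by
    intro a b hab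
    rcases lt_trichotomy a b with h | h | h
    · exact absurd (hs a b h) (by rw [hab]; exact lt_irrefl _)
    · exact h
    · exact absurd (hs b a h) (by rw [hab]; exact lt_irrefl _)
  have h1 : (Finset.Iic j).image s ⊆ Finset.Ici (s j) := by
    intro x hx
    obtain ⟨y, hy, rfl⟩ := Finset.mem_image.1 hx
    rcases lt_or_eq_of_le (Finset.mem_Iic.1 hy) with h | h
    · exact Finset.mem_Ici.2 (le_of_lt (hs y j h))
    · rw [h]; exact Finset.mem_Ici.2 le_rfl
  have h2 : (Finset.Ici j).image s ⊆ Finset.Iic (s j) := by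
    intro x hx
    obtain ⟨y, hy, rfl⟩ := Finset.mem_image.1 hx
    rcases lt_or_eq_of_le (Finset.mem_Ici.1 hy) with h | h
    · exact Finset.mem_Iic.2 (le_of_lt (hs j y h))
    · rw [← h]; exact Finset.mem_Iic.2 le_rfl
  have c1 := Finset.card_le_card h1
  have c2 := Finset.card_le_card h2
  rw [Finset.card_image_of_injective _ hinj] at c1 c2
  simp only [Fin.card_Iic, Fin.card_Ici] at c1 c2
  have := j.isLt
  have := (s j).isLt
  omega

def swapFun (t : Fin n → Fin n) (j0 l0 : Fin n) : Fin n → Fin n :=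
  fun j => if j = j0 then t l0 else if j = l0 then t j0 else t j

lemma classify (hA : IsSquareSign n A) (hN : negCount n A = 0) (hW : W A = 1) :
    ∃ k : ℕ, k + 1 < n ∧ A = Mmat n k := by
  have hfe : Finset.univ.filter (fun p : Fin n × Fin n => A p.1 p.2 = -1) = ∅ :=
    Finset.card_eq_zero.1 hN
  have hnn : ∀ i j, 0 ≤ A i j := by
    intro i j
    rcases hA.1 i j with h | h | h
    · exfalso
      have : (i, j) ∈ Finset.univ.filter (fun p : Fin n × Fin n => A p.1 p.2 = -1) := by
        simp [h]
      rw [hfe] at this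
      exact absurd this (Finset.notMem_empty _)
    · omega
    · omega
  have hex : ∀ j, ∃ i, A i j = 1 := by
    intro j
    obtain ⟨i, _, hpos⟩ := exists_pos_of_one_le (le_of_eq (hA.2.1 j).symm)
    exact ⟨i, eq_one_of_pos hA hpos⟩
  choose t ht using hex
  have huniq : ∀ j i, A i j = 1 → i = t j := by
    intro j i h
    by_contra hne
    exact two_ones_col hA hne (fun i' => hnn i' j) h (ht j)
  have hform : ∀ i j, A i j = if i = t j then 1 else 0 := by
    intro i j
    by_cases h : i = t j
    · rw [if_pos h, h]; exact ht j
    · rw [if_neg h]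
      rcases hA.1 i j with h' | h' | h'
      · exfalso; have := hnn i j; omega
      · exact h'
      · exact absurd (huniq j i h') h
  have htinj : Function.Injective t := by
    intro a b hab
    by_contra hne
    exact two_ones_row hA hne (fun j => hnn (t a) j) (ht a) (by rw [hab]; exact ht b)
  have hT : ∀ l j : Fin n, Tlj A l j = if t j ≤ t l then 1 else 0 := by
    intro l j
    rw [Tlj]
    have e1 : ∀ kk, A kk l * (∑ i ∈ Finset.Iic kk, A i j)
        = (if kk = t l then (1:ℤ) else 0) * (∑ i ∈ Finset.Iic kk, A i j) := by
      intro kk; rw [← hform]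
    simp_rw [e1]
    have e2 : (∑ kk, (if kk = t l then (1:ℤ) else 0) * (∑ i ∈ Finset.Iic kk, A i j))
        = ∑ i ∈ Finset.Iic (t l), A i j := by
      simp
    rw [e2]
    have e3 : ∀ i, A i j = if i = t j then (1:ℤ) else 0 := hform (j := j)
    simp_rw [e3]
    rw [Finset.sum_ite_eq' (Finset.Iic (t l)) (t j) (fun _ => (1:ℤ))]
    simp
  have hWcard : (Finset.univ.filter
      (fun p : Fin n × Fin n => p.2 < p.1 ∧ t p.2 ≤ t p.1)).card = 1 := by
    have e1 : ∀ l : Fin n, ∑ j ∈ Finset.Iio l, Tlj A l j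
        = ∑ j, if j < l ∧ t j ≤ t l then (1:ℤ) else 0 := by
      intro l
      simp_rw [hT]
      rw [show Finset.Iio l = Finset.univ.filter (fun j => j < l) by ext x; simp,
        Finset.sum_filter]
      apply Finset.sum_congr rfl
      intro j _
      split_ifs <;> tauto
    have e2 : W A = ((Finset.univ.filter
        (fun p : Fin n × Fin n => p.2 < p.1 ∧ t p.2 ≤ t p.1)).card : ℤ) := by
      rw [W]
      simp_rw [e1]
      rw [← Fintype.sum_prod_type (f := fun (p : Fin n × Fin n) =>
        if p.2 < p.1 ∧ t p.2 ≤ t p.1 then (1:ℤ) else 0)]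
      simp [Finset.sum_boole]
    have hcast : ((Finset.univ.filter
        (fun p : Fin n × Fin n => p.2 < p.1 ∧ t p.2 ≤ t p.1)).card : ℤ) = 1 := by
      rw [← e2]; exact hW
    exact_mod_cast hcast
  obtain ⟨p0, hp0⟩ := Finset.card_eq_one.1 hWcard
  obtain ⟨l0, j0⟩ := p0
  have hp0mem : j0 < l0 ∧ t j0 ≤ t l0 := by
    have : (l0, j0) ∈ Finset.univ.filter
        (fun p : Fin n × Fin n => p.2 < p.1 ∧ t p.2 ≤ t p.1) := by
      rw [hp0]; simp
    simpa using this
  have hother : ∀ l j : Fin n, j < l → ¬(l = l0 ∧ j = j0) → t l < t j := by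
    intro l j hjl hne
    by_contra hc
    have : (l, j) ∈ Finset.univ.filter
        (fun p : Fin n × Fin n => p.2 < p.1 ∧ t p.2 ≤ t p.1) := by
      simp [hjl, not_lt.1 hc]
    rw [hp0, Finset.mem_singleton, Prod.ext_iff] at this
    exact hne this
  have hj0l0 : j0 < l0 := hp0mem.1
  have hne01 : j0 ≠ l0 := ne_of_lt hj0l0
  have hne10 : l0 ≠ j0 := hne01.symm
  have hlt_tj : t j0 < t l0 :=
    lt_of_le_of_ne hp0mem.2 (fun h => absurd (htinj h) hne01)
  have hadj : l0.val = j0.val + 1 := by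
    by_contra hne'
    have hlt : j0.val + 1 < l0.val := by
      have := Fin.lt_def.1 hj0l0; omega
    set m : Fin n := ⟨j0.val + 1, by have := l0.isLt; omega⟩ with hm
    have h1 : t m < t j0 := by
      refine hother m j0 (Fin.lt_def.2 (by simp [hm])) ?_
      rintro ⟨h, -⟩
      rw [Fin.ext_iff] at h
      simp [hm] at h
      omega
    have h2 : t l0 < t m := by
      refine hother l0 m (Fin.lt_def.2 (by simp [hm]; omega)) ?_
      rintro ⟨-, h⟩
      rw [Fin.ext_iff] at h
      simp [hm] at h
    exact absurd ((h2.trans h1).trans_le hp0mem.2) (lt_irrefl _)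
  -- the swapped map is strictly decreasing
  set s : Fin n → Fin n := swapFun t j0 l0 with hsdef
  have hsj0 : s j0 = t l0 := by simp [hsdef, swapFun]
  have hsl0 : s l0 = t j0 := by simp [hsdef, swapFun, hne10]
  have hsother : ∀ j, j ≠ j0 → j ≠ l0 → s j = t j := by
    intro j h1 h2; simp [hsdef, swapFun, h1, h2]
  have hs : ∀ a b : Fin n, a < b → s b < s a := by
    intro a b hab
    have hvab : a.val < b.val := Fin.lt_def.1 hab
    have hvadj : l0.val = j0.val + 1 := hadj
    by_cases ha0 : a = j0
    · have hva : a.val = j0.val := congrArg Fin.val ha0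
      by_cases hbl : b = l0
      · rw [ha0, hbl, hsj0, hsl0]; exact hlt_tj
      · have hvbl : b.val ≠ l0.val := fun h => hbl (Fin.ext h)
        have hb0 : b ≠ j0 := fun h => by
          have := congrArg Fin.val h; omega
        rw [ha0, hsj0, hsother b hb0 hbl]
        exact hother b l0 (Fin.lt_def.2 (by omega)) (by rintro ⟨-, h⟩; exact hne10 h)
    · have hva0 : a.val ≠ j0.val := fun h => ha0 (Fin.ext h)
      by_cases hal : a = l0
      · have hva : a.val = l0.val := congrArg Fin.val hal
        have hb0 : b ≠ j0 := fun h => by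
          have := congrArg Fin.val h; omega
        have hbl : b ≠ l0 := fun h => by
          have := congrArg Fin.val h; omega
        rw [hal, hsl0, hsother b hb0 hbl]
        exact hother b j0 (Fin.lt_def.2 (by omega)) (by rintro ⟨h, -⟩; exact hbl h)
      · have hval : a.val ≠ l0.val := fun h => hal (Fin.ext h)
        by_cases hb0 : b = j0
        · have hvb : b.val = j0.val := congrArg Fin.val hb0
          rw [hb0, hsj0, hsother a ha0 hal]
          exact hother l0 a (Fin.lt_def.2 (by omega)) (by rintro ⟨-, h⟩; exact ha0 h)
        · by_cases hbl : b = l0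
          · have hvb : b.val = l0.val := congrArg Fin.val hbl
            rw [hbl, hsl0, hsother a ha0 hal]
            exact hother j0 a (Fin.lt_def.2 (by omega)) (by rintro ⟨h, -⟩; exact hne01 h)
          · rw [hsother a ha0 hal, hsother b hb0 hbl]
            exact hother b a hab (by rintro ⟨h, -⟩; exact hbl h)
  have hrev := rev_of_strictAnti hs
  refine ⟨j0.val, by have := l0.isLt; omega, ?_⟩
  have htval : ∀ j : Fin n, (t j).val = tau n j0.val j.val := by
    intro j
    by_cases h1 : j = j0
    · rw [h1, hsl0.symm, hrev l0, tau, if_pos rfl]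
      omega
    · by_cases h2 : j = l0
      · rw [h2, hsj0.symm, hrev j0, tau]
        rw [if_neg (by omega), if_pos (by omega)]
      · have : t j = s j := (hsother j h1 h2).symm
        rw [this, hrev j, tau]
        have hv1 : j.val ≠ j0.val := fun h => h1 (Fin.ext h)
        have hv2 : j.val ≠ l0.val := fun h => h2 (Fin.ext h)
        rw [if_neg hv1, if_neg (by omega)]
  funext i j
  rw [hform i j, Mmat]
  by_cases h : i = t j
  · rw [if_pos h, if_pos (by rw [h, htval j])]
  · rw [if_neg h, if_neg (fun hc => h (Fin.ext (by rw [hc, htval j])))]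

lemma posInv_eq (hA : IsSquareSign n A) :
    posInvNum n A = (n.choose 2 : ℤ) - (W A + (negCount n A : ℤ)) := by
  rw [posInvNum, invNum_eq _ hA]; ring

end Classify

end MagogAux

/-- For `n ≥ 2`, there are exactly `n - 1` magog matrices with positive
inversion number `C(n,2) - 1`. -/
theorem card_magog_posinv_choose_sub_one (n : ℕ) (hn : 2 ≤ n) :
    Nat.card {A : Fin n → Fin n → ℤ //
        IsMagog n A ∧ posInvNum n A = (n.choose 2 : ℤ) - 1} = n - 1 := by
  classical
  have hchar : ∀ B : Fin n → Fin n → ℤ,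
      (IsMagog n B ∧ posInvNum n B = (n.choose 2 : ℤ) - 1) ↔
      (∃ k : Fin (n-1), B = MagogAux.Mmat n k.val) := by
    intro B
    constructor
    · rintro ⟨⟨hsq, -⟩, hpos⟩
      have hpi := MagogAux.posInv_eq hsq
      have hiden : MagogAux.W B + (negCount n B : ℤ) = 1 := by linarith
      have hWnn := MagogAux.W_nonneg hsq
      have hNle : negCount n B = 0 ∨ negCount n B = 1 := by
        rcases Nat.lt_or_ge (negCount n B) 2 with h | h
        · omega
        · exfalso
          have : (2:ℤ) ≤ (negCount n B : ℤ) := by exact_mod_cast h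
          linarith
      rcases hNle with h0 | h1
      · have hW1 : MagogAux.W B = 1 := by
          rw [h0] at hiden; push_cast at hiden; linarith
        obtain ⟨k, hk, rfl⟩ := MagogAux.classify hsq h0 hW1
        exact ⟨⟨k, by omega⟩, rfl⟩
      · exfalso
        have hW0 : MagogAux.W B = 0 := by
          rw [h1] at hiden; push_cast at hiden; linarith
        exact MagogAux.no_N1 hsq hW0 h1
    · rintro ⟨k, rfl⟩
      have hk : k.val + 1 < n := by have := k.isLt; omega
      exact ⟨MagogAux.Mmat_magog hk, MagogAux.posInv_Mmat hk⟩
  have key : ∀ x y : Fin (n-1), x.val < y.val →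
      MagogAux.Mmat n x.val ≠ MagogAux.Mmat n y.val := by
    intro x y hxy heq
    have hy2 : y.val + 1 < n := by have := y.isLt; omega
    have hrowlt : n - 2 - x.val < n := by omega
    have hcollt : x.val < n := by omega
    have e1 : MagogAux.tau n x.val x.val = n - 2 - x.val := by
      rw [MagogAux.tau, if_pos rfl]
    have e2 : MagogAux.tau n y.val x.val = n - 1 - x.val := by
      rw [MagogAux.tau, if_neg (by omega), if_neg (by omega)]
    have h1 : (if n - 2 - x.val = MagogAux.tau n x.val x.val then (1:ℤ) else 0)
        = (if n - 2 - x.val = MagogAux.tau n y.val x.val then (1:ℤ) else 0) :=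
      congrFun (congrFun heq ⟨n - 2 - x.val, hrowlt⟩) ⟨x.val, hcollt⟩
    rw [e1, e2, if_pos rfl, if_neg (by omega)] at h1
    norm_num at h1
  have hMinj : Function.Injective (fun k : Fin (n-1) => MagogAux.Mmat n k.val) := by
    intro a b hab
    by_contra hne
    have hvne : a.val ≠ b.val := fun h => hne (Fin.ext h)
    rcases lt_or_gt_of_ne hvne with h | h
    · exact key a b h hab
    · exact key b a h hab.symm
  have hbij : Function.Bijective (fun k : Fin (n-1) =>
      (⟨MagogAux.Mmat n k.val, (hchar _).2 ⟨k, rfl⟩⟩ :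
        {A : Fin n → Fin n → ℤ // IsMagog n A ∧ posInvNum n A = (n.choose 2 : ℤ) - 1})) := by
    constructor
    · intro a b hab
      exact hMinj (congrArg Subtype.val hab)
    · rintro ⟨B, hB⟩
      obtain ⟨k, rfl⟩ := (hchar B).1 hB
      exact ⟨k, rfl⟩
  rw [← Nat.card_eq_of_bijective _ hbij]
  simp
end

section
/- Let n ≥ 1 and let TSSCPP(n) ⊆ ℝ^(n×n) be the convex hull of the set of n×n magog matrices (viewed as real matrices). Then every matrix A = (a_{ij}) ∈ TSSCPP(n) satisfies: (i) ∑_{j'=1}^{j} a_{i+1,j'} + ∑_{i'=1}^{i+1} a_{i',j+1} ≥ 1 for all 1 ≤ i ≤ n−2 and 1 ≤ j ≤ n−2 with i + j ≥ n−1; (ii) ∑_{j'=1}^{j+1} a_{2,j'} + ∑_{j'=j+1}^{n} a_{1,j'} ≥ 1 for all 1 ≤ j ≤ n−3; and (iii) ∑_{i'=1}^{i+1} a_{i',2} + ∑_{i'=i+1}^{n} a_{i',1} ≥ 1 for all 1 ≤ i ≤ n−3. -/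
/-- The set of `n × n` magog matrices regarded as real matrices. -/
def magogReal (n : ℕ) : Set (Fin n → Fin n → ℝ) :=
  {A | ∃ M : Fin n → Fin n → ℤ, IsMagog n M ∧ A = fun i j => (M i j : ℝ)}

namespace MagogAux


variable {n : ℕ}

def ent (n : ℕ) (M : Fin n → Fin n → ℤ) (i j : ℕ) : ℤ :=
  if h : i < n ∧ j < n then M ⟨i, h.1⟩ ⟨j, h.2⟩ else 0

def rp (n : ℕ) (M : Fin n → Fin n → ℤ) (i j : ℕ) : ℤ :=
  ∑ k ∈ Finset.range (j + 1), ent n M i k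

def cp (n : ℕ) (M : Fin n → Fin n → ℤ) (i j : ℕ) : ℤ :=
  ∑ k ∈ Finset.range (i + 1), ent n M k j

lemma sum_Iic_fin (f : Fin n → ℤ) (k : ℕ) (hk : k < n) :
    ∑ x ∈ Finset.Iic (⟨k, hk⟩ : Fin n), f x
      = ∑ m ∈ Finset.range (k + 1), (if h : m < n then f ⟨m, h⟩ else 0) := by
  induction k with
  | zero =>
      have h0 : (Finset.Iic (⟨0, hk⟩ : Fin n)) = {⟨0, hk⟩} := by
        ext x
        simp [Fin.le_def, Fin.ext_iff, Nat.le_zero]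
      simp [h0, hk]
  | succ k ih =>
      have hk' : k < n := by omega
      have hins : (Finset.Iic (⟨k+1, hk⟩ : Fin n))
          = insert (⟨k+1, hk⟩ : Fin n) (Finset.Iic (⟨k, hk'⟩ : Fin n)) := by
        ext x
        simp only [Finset.mem_Iic, Finset.mem_insert, Fin.le_def, Fin.ext_iff]
        omega
      rw [hins, Finset.sum_insert (by simp [Fin.le_def]), ih hk',
        Finset.sum_range_succ _ (k + 1), dif_pos hk]
      ring

lemma sum_Iic_row (M : Fin n → Fin n → ℤ) (i k : ℕ) (hi : i < n) (hk : k < n) :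
    ∑ j' ∈ Finset.Iic (⟨k, hk⟩ : Fin n), M ⟨i, hi⟩ j' = rp n M i k := by
  rw [sum_Iic_fin]
  refine Finset.sum_congr rfl fun m _ => ?_
  unfold ent
  by_cases h : m < n <;> simp [h, hi]

lemma sum_Iic_col (M : Fin n → Fin n → ℤ) (k j : ℕ) (hk : k < n) (hj : j < n) :
    ∑ i' ∈ Finset.Iic (⟨k, hk⟩ : Fin n), M i' ⟨j, hj⟩ = cp n M k j := by
  rw [sum_Iic_fin]
  refine Finset.sum_congr rfl fun m _ => ?_
  unfold ent
  by_cases h : m < n <;> simp [h, hj]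



section Facts
variable {n : ℕ} {M : Fin n → Fin n → ℤ} (hM : IsMagog n M)

include hM

lemma cp_nonneg {i j : ℕ} (hi : i < n) (hj : j < n) : 0 ≤ cp n M i j := by
  have h := hM.1.2.2.2.1 ⟨i, hi⟩ ⟨j, hj⟩
  rw [sum_Iic_col] at h
  exact h.1

lemma cp_le_one {i j : ℕ} (hi : i < n) (hj : j < n) : cp n M i j ≤ 1 := by
  have h := hM.1.2.2.2.1 ⟨i, hi⟩ ⟨j, hj⟩
  rw [sum_Iic_col] at h
  exact h.2

lemma rp_nonneg {i j : ℕ} (hi : i < n) (hj : j < n) : 0 ≤ rp n M i j := by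
  have h := hM.1.2.2.2.2 ⟨i, hi⟩ ⟨j, hj⟩
  rwa [sum_Iic_row] at h

lemma rp_last {i : ℕ} (hi : i < n) : rp n M i (n - 1) = 1 := by
  have h := hM.1.2.2.1 ⟨i, hi⟩
  have e : ∑ j : Fin n, M ⟨i, hi⟩ j = ∑ k ∈ Finset.range n, ent n M i k := by
    rw [← Fin.sum_univ_eq_sum_range (fun k => ent n M i k) n]
    refine Finset.sum_congr rfl fun j _ => ?_
    simp [ent, hi, j.isLt]
  have hn : n - 1 + 1 = n := by omega
  rw [rp, hn, ← e, h]

lemma cp_last {j : ℕ} (hj : j < n) : cp n M (n - 1) j = 1 := by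
  have h := hM.1.2.1 ⟨j, hj⟩
  have e : ∑ i : Fin n, M i ⟨j, hj⟩ = ∑ k ∈ Finset.range n, ent n M k j := by
    rw [← Fin.sum_univ_eq_sum_range (fun k => ent n M k j) n]
    refine Finset.sum_congr rfl fun i _ => ?_
    simp [ent, hj, i.isLt]
  have hn : n - 1 + 1 = n := by omega
  rw [cp, hn, ← e, h]

lemma special {i j : ℕ} (hi : i + 2 < n) (hj : j + 2 < n) :
    cp n M i j ≤ rp n M (i + 1) j + cp n M (i + 1) (j + 1) := by
  have h := hM.2 i j hi hj
  rw [sum_Iic_row M (i+1) j (by omega) (by omega),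
      sum_Iic_col M (i+1) (j+1) (by omega) (by omega),
      sum_Iic_col M i j (by omega) (by omega)] at h
  linarith

end Facts

section Basic
variable {n : ℕ} (M : Fin n → Fin n → ℤ)

lemma rp_succ (i j : ℕ) : rp n M i (j + 1) = rp n M i j + ent n M i (j + 1) :=
  Finset.sum_range_succ _ _

lemma cp_succ (i j : ℕ) : cp n M (i + 1) j = cp n M i j + ent n M (i + 1) j :=
  Finset.sum_range_succ _ _

lemma rp_zero (i : ℕ) : rp n M i 0 = ent n M i 0 := Finset.sum_range_one _

lemma cp_zero (j : ℕ) : cp n M 0 j = ent n M 0 j := Finset.sum_range_one _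

lemma cp_one (j : ℕ) : cp n M 1 j = ent n M 0 j + ent n M 1 j := by
  simp [cp, Finset.sum_range_succ]

end Basic

section Main
variable {n : ℕ} {M : Fin n → Fin n → ℤ} (hM : IsMagog n M)

include hM

lemma ent_row0_nonneg (k : ℕ) : 0 ≤ ent n M 0 k := by
  by_cases hk : k < n
  · have := cp_nonneg hM (by omega : 0 < n) hk
    rwa [cp_zero] at this
  · simp [ent, hk]

lemma ent_col0_nonneg (k : ℕ) : 0 ≤ ent n M k 0 := by
  by_cases hk : k < n
  · have h0 : 0 < n := by omega
    have := rp_nonneg hM hk h0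
    rwa [rp_zero] at this
  · have : ¬ (k < n ∧ 0 < n) := fun h => hk h.1
    simp [ent, this]

lemma rp_row0_le_one {j : ℕ} (hj : j < n) : rp n M 0 j ≤ 1 := by
  have hle : rp n M 0 j ≤ rp n M 0 (n - 1) := by
    apply Finset.sum_le_sum_of_subset_of_nonneg
    · exact Finset.range_subset_range.2 (by omega)
    · exact fun k _ _ => ent_row0_nonneg hM k
  rw [rp_last hM (by omega : (0:ℕ) < n)] at hle
  exact hle

theorem ineq_two {j : ℕ} (hj : j + 3 < n) : rp n M 0 j ≤ rp n M 1 (j + 1) := by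
  induction j with
  | zero =>
      have h1n : 1 < n := by omega
      rcases le_or_gt 1 (ent n M 0 0) with h | h
      · have hsp := special hM (i := 0) (j := 0) (by omega) (by omega)
        have h11 : rp n M 1 1 = rp n M 1 0 + ent n M 1 1 := rp_succ M 1 0
        have hc11 : cp n M 1 1 = ent n M 0 1 + ent n M 1 1 := cp_one M 1
        have hc00 : cp n M 0 0 = ent n M 0 0 := cp_zero M 0
        have hr01 : rp n M 0 1 = rp n M 0 0 + ent n M 0 1 := rp_succ M 0 0
        have hr00 : rp n M 0 0 = ent n M 0 0 := rp_zero M 0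
        have hle1 : rp n M 0 1 ≤ 1 := rp_row0_le_one hM h1n
        have he00 : ent n M 0 0 ≤ 1 := by
          have := cp_le_one hM (by omega : (0:ℕ) < n) (by omega : (0:ℕ) < n)
          rwa [cp_zero] at this
        linarith
      · have hr00 : rp n M 0 0 = ent n M 0 0 := rp_zero M 0
        have := rp_nonneg hM h1n h1n
        linarith
  | succ j ih =>
      have ih' := ih (by omega)
      have e1nn : 0 ≤ ent n M 0 (j + 1) := ent_row0_nonneg hM _
      have e2nn : 0 ≤ ent n M 0 (j + 2) := ent_row0_nonneg hM _
      have hr2 : rp n M 0 (j + 2) = rp n M 0 (j + 1) + ent n M 0 (j + 2) := rp_succ M 0 (j+1)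
      have hr1 : rp n M 0 (j + 1) = rp n M 0 j + ent n M 0 (j + 1) := rp_succ M 0 j
      have hR2 : rp n M 1 (j + 2) = rp n M 1 (j + 1) + ent n M 1 (j + 2) := rp_succ M 1 (j+1)
      have hle2 : rp n M 0 (j + 2) ≤ 1 := rp_row0_le_one hM (by omega)
      have h0j : 0 ≤ rp n M 0 j := rp_nonneg hM (by omega) (by omega)
      rcases le_or_gt 1 (ent n M 0 (j + 1)) with h | h
      · have hsp := special hM (i := 0) (j := j + 1) (by omega) (by omega)
        have hc : cp n M 1 (j + 2) = ent n M 0 (j + 2) + ent n M 1 (j + 2) := cp_one M _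
        have hc0 : cp n M 0 (j + 1) = ent n M 0 (j + 1) := cp_zero M _
        linarith
      · rcases le_or_gt 1 (ent n M 0 (j + 2)) with h2 | h2
        · have h01 : 0 ≤ rp n M 0 (j + 1) := rp_nonneg hM (by omega) (by omega)
          have hRnn : 0 ≤ rp n M 1 (j + 2) := rp_nonneg hM (by omega) (by omega)
          linarith
        · have hcnn : 0 ≤ cp n M 1 (j + 2) := cp_nonneg hM (by omega) (by omega)
          have hc : cp n M 1 (j + 2) = ent n M 0 (j + 2) + ent n M 1 (j + 2) := cp_one M _
          linarith

theorem ineq_three {i : ℕ} (hi : i + 3 < n) : cp n M i 0 ≤ cp n M (i + 1) 1 := by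
  induction i with
  | zero =>
      have h1n : 1 < n := by omega
      rcases le_or_gt 1 (ent n M 0 0) with h | h
      · have hsp := special hM (i := 0) (j := 0) (by omega) (by omega)
        have hc10 : cp n M 1 0 = ent n M 0 0 + ent n M 1 0 := cp_one M 0
        have hc00 : cp n M 0 0 = ent n M 0 0 := cp_zero M 0
        have hr10 : rp n M 1 0 = ent n M 1 0 := rp_zero M 1
        have hle1 : cp n M 1 0 ≤ 1 := cp_le_one hM h1n (by omega)
        have hnn : 0 ≤ ent n M 1 0 := ent_col0_nonneg hM 1
        linarith
      · have hc00 : cp n M 0 0 = ent n M 0 0 := cp_zero M 0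
        have := cp_nonneg hM h1n h1n
        linarith
  | succ i ih =>
      have ih' := ih (by omega)
      have f1nn : 0 ≤ ent n M (i + 1) 0 := ent_col0_nonneg hM _
      have f2nn : 0 ≤ ent n M (i + 2) 0 := ent_col0_nonneg hM _
      have hc2 : cp n M (i + 2) 0 = cp n M (i + 1) 0 + ent n M (i + 2) 0 := cp_succ M (i+1) 0
      have hc1 : cp n M (i + 1) 0 = cp n M i 0 + ent n M (i + 1) 0 := cp_succ M i 0
      have hC2 : cp n M (i + 2) 1 = cp n M (i + 1) 1 + ent n M (i + 2) 1 := cp_succ M (i+1) 1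
      have hle2 : cp n M (i + 2) 0 ≤ 1 := cp_le_one hM (by omega) (by omega)
      have h0i : 0 ≤ cp n M i 0 := cp_nonneg hM (by omega) (by omega)
      rcases le_or_gt 1 (ent n M (i + 1) 0) with h | h
      · have hsp := special hM (i := i + 1) (j := 0) (by omega) (by omega)
        have hr : rp n M (i + 2) 0 = ent n M (i + 2) 0 := rp_zero M _
        linarith
      · rcases le_or_gt 1 (ent n M (i + 2) 0) with h2 | h2
        · have h01 : 0 ≤ cp n M (i + 1) 0 := cp_nonneg hM (by omega) (by omega)
          have hCnn : 0 ≤ cp n M (i + 2) 1 := cp_nonneg hM (by omega) (by omega)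
          linarith
        · have hrnn : 0 ≤ rp n M (i + 2) 1 := rp_nonneg hM (by omega) (by omega)
          have hr : rp n M (i + 2) 1 = rp n M (i + 2) 0 + ent n M (i + 2) 1 := rp_succ M _ 0
          have hr0 : rp n M (i + 2) 0 = ent n M (i + 2) 0 := rp_zero M _
          linarith

theorem ineq_one {i j : ℕ} (hi : i + 2 < n) (hj : j + 2 < n) (hij : n ≤ i + j + 3) :
    1 ≤ rp n M (i + 1) j + cp n M (i + 1) (j + 1) := by
  by_contra hcon
  push_neg at hcon
  have hrnn : 0 ≤ rp n M (i + 1) j := rp_nonneg hM (by omega) (by omega)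
  have hcnn : 0 ≤ cp n M (i + 1) (j + 1) := cp_nonneg hM (by omega) (by omega)
  have hr0 : rp n M (i + 1) j = 0 := by omega
  have hc0 : cp n M (i + 1) (j + 1) = 0 := by omega
  have key : ∀ k, k ≤ j → rp n M (i + 1) (j - k) = 0 ∧ cp n M (i + 1) (j - k + 1) = 0 := by
    intro k
    induction k with
    | zero => intro _; simpa using ⟨hr0, hc0⟩
    | succ k ihk =>
        intro hk1
        obtain ⟨h1, h2⟩ := ihk (by omega)
        have hm : j - k = (j - (k + 1)) + 1 := by omega
        set m := j - (k + 1) with hmdef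
        rw [hm] at h1 h2
        have hsp := special hM (i := i) (j := m + 1) (by omega) (by omega)
        have hcim : 0 ≤ cp n M i (m + 1) := cp_nonneg hM (by omega) (by omega)
        have hcs : cp n M (i + 1) (m + 1) = cp n M i (m + 1) + ent n M (i + 1) (m + 1) :=
          cp_succ M i (m + 1)
        have hrs : rp n M (i + 1) (m + 1) = rp n M (i + 1) m + ent n M (i + 1) (m + 1) :=
          rp_succ M (i + 1) m
        have hrnn' : 0 ≤ rp n M (i + 1) m := rp_nonneg hM (by omega) (by omega)
        have hcnn' : 0 ≤ cp n M (i + 1) (m + 1) := cp_nonneg hM (by omega) (by omega)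
        omega
  have hA : rp n M (i + 1) 0 = 0 := by
    have := (key j le_rfl).1
    rwa [Nat.sub_self] at this
  have hB : cp n M (i + 1) 1 = 0 := by
    have := (key j le_rfl).2
    rwa [Nat.sub_self] at this
  have hC : cp n M (i + 1) 0 = 0 := by
    have hsp := special hM (i := i) (j := 0) (by omega) (by omega)
    have hci0 : 0 ≤ cp n M i 0 := cp_nonneg hM (by omega) (by omega)
    have hcs : cp n M (i + 1) 0 = cp n M i 0 + ent n M (i + 1) 0 := cp_succ M i 0
    have hrz : rp n M (i + 1) 0 = ent n M (i + 1) 0 := rp_zero M (i + 1)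
    have hsp' : cp n M i 0 ≤ rp n M (i + 1) 0 + cp n M (i + 1) 1 := by simpa using hsp
    omega
  have hz : ∀ m ≤ j + 1, cp n M (i + 1) m = 0 := by
    intro m hm
    match m with
    | 0 => exact hC
    | Nat.succ m' =>
        obtain ⟨_, h⟩ := key (j - m') (by omega)
        have he : j - (j - m') = m' := by omega
        rwa [he] at h
  have hsum : ∑ m ∈ Finset.range n, cp n M (i + 1) m = (i : ℤ) + 2 := by
    unfold cp
    rw [Finset.sum_comm]
    have hone : ∀ k ∈ Finset.range (i + 1 + 1), ∑ m ∈ Finset.range n, ent n M k m = 1 := by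
      intro k hk
      have hkn : k < n := by
        have := Finset.mem_range.1 hk; omega
      have h := rp_last hM hkn
      rw [rp, show n - 1 + 1 = n from by omega] at h
      exact h
    rw [Finset.sum_congr rfl hone, Finset.sum_const, Finset.card_range, nsmul_eq_mul, mul_one]
    push_cast; ring
  have hsplit : ∑ m ∈ Finset.range n, cp n M (i + 1) m
      = ∑ m ∈ Finset.range (j + 2), cp n M (i + 1) m
        + ∑ m ∈ Finset.Ico (j + 2) n, cp n M (i + 1) m := by
    rw [Finset.range_eq_Ico, Finset.range_eq_Ico]
    exact (Finset.sum_Ico_consecutive (f := fun m => cp n M (i + 1) m) (by omega : 0 ≤ j + 2) (by omega : j + 2 ≤ n)).symm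
  have hfirst : ∑ m ∈ Finset.range (j + 2), cp n M (i + 1) m = 0 :=
    Finset.sum_eq_zero fun m hm => hz m (by have := Finset.mem_range.1 hm; omega)
  have hsecond : ∑ m ∈ Finset.Ico (j + 2) n, cp n M (i + 1) m
      ≤ ((n - (j + 2) : ℕ) : ℤ) := by
    have h1 : ∑ m ∈ Finset.Ico (j + 2) n, cp n M (i + 1) m
        ≤ (Finset.Ico (j + 2) n).card • (1 : ℤ) :=
      Finset.sum_le_card_nsmul _ _ 1 fun m hm =>
        cp_le_one hM (by omega) (Finset.mem_Ico.1 hm).2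
    rwa [Nat.card_Ico, nsmul_eq_mul, mul_one] at h1
  rw [hsplit, hfirst, zero_add] at hsum
  have : (i : ℤ) + 2 ≤ ((n - (j + 2) : ℕ) : ℤ) := hsum ▸ hsecond
  omega

end Main

section Ici
variable {n : ℕ}

lemma sum_Ici_row (M : Fin n → Fin n → ℤ) (j : ℕ) (hj1 : j + 1 < n) (h0 : 0 < n) :
    ∑ j' ∈ Finset.Ici (⟨j + 1, hj1⟩ : Fin n), M ⟨0, h0⟩ j'
      = (∑ j' : Fin n, M ⟨0, h0⟩ j') - rp n M 0 j := by
  have hset : Finset.Ici (⟨j + 1, hj1⟩ : Fin n)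
      = Finset.univ \ Finset.Iic (⟨j, by omega⟩ : Fin n) := by
    ext x
    simp only [Finset.mem_Ici, Finset.mem_sdiff, Finset.mem_univ, true_and,
      Finset.mem_Iic, Fin.le_def, not_le]
    omega
  rw [hset, Finset.sum_sdiff_eq_sub (Finset.subset_univ _),
    sum_Iic_row M 0 j h0 (by omega)]

lemma sum_Ici_col (M : Fin n → Fin n → ℤ) (i : ℕ) (hi1 : i + 1 < n) (h0 : 0 < n) :
    ∑ i' ∈ Finset.Ici (⟨i + 1, hi1⟩ : Fin n), M i' ⟨0, h0⟩
      = (∑ i' : Fin n, M i' ⟨0, h0⟩) - cp n M i 0 := by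
  have hset : Finset.Ici (⟨i + 1, hi1⟩ : Fin n)
      = Finset.univ \ Finset.Iic (⟨i, by omega⟩ : Fin n) := by
    ext x
    simp only [Finset.mem_Ici, Finset.mem_sdiff, Finset.mem_univ, true_and,
      Finset.mem_Iic, Fin.le_def, not_le]
    omega
  rw [hset, Finset.sum_sdiff_eq_sub (Finset.subset_univ _),
    sum_Iic_col M i 0 (by omega) h0]

end Ici
end MagogAux

open MagogAux

/-- Partial inequality description of the magog matrix polytope `TSSCPP(n)`,
the convex hull of the `n × n` magog matrices.  The indices `i, j` below are
0-based, corresponding to the paper's 1-based `i+1, j+1`. -/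
theorem tsscppPolytope_inequalities (n : ℕ) (hn : 0 < n) :
    ∀ A ∈ convexHull ℝ (magogReal n),
      (∀ (i j : ℕ) (hi : i + 2 < n) (hj : j + 2 < n), n ≤ i + j + 3 →
        1 ≤ (∑ j' ∈ Finset.Iic (⟨j, by omega⟩ : Fin n), A ⟨i + 1, by omega⟩ j')
          + (∑ i' ∈ Finset.Iic (⟨i + 1, by omega⟩ : Fin n), A i' ⟨j + 1, by omega⟩)) ∧
      (∀ (j : ℕ) (hj : j + 3 < n),
        1 ≤ (∑ j' ∈ Finset.Iic (⟨j + 1, by omega⟩ : Fin n), A ⟨1, by omega⟩ j')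
          + (∑ j' ∈ Finset.Ici (⟨j + 1, by omega⟩ : Fin n), A ⟨0, by omega⟩ j')) ∧
      (∀ (i : ℕ) (hi : i + 3 < n),
        1 ≤ (∑ i' ∈ Finset.Iic (⟨i + 1, by omega⟩ : Fin n), A i' ⟨1, by omega⟩)
          + (∑ i' ∈ Finset.Ici (⟨i + 1, by omega⟩ : Fin n), A i' ⟨0, by omega⟩)) := by
  have h1 : magogReal n ⊆ {A : Fin n → Fin n → ℝ |
      (∀ (i j : ℕ) (hi : i + 2 < n) (hj : j + 2 < n), n ≤ i + j + 3 →
        1 ≤ (∑ j' ∈ Finset.Iic (⟨j, by omega⟩ : Fin n), A ⟨i + 1, by omega⟩ j')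
          + (∑ i' ∈ Finset.Iic (⟨i + 1, by omega⟩ : Fin n), A i' ⟨j + 1, by omega⟩)) ∧
      (∀ (j : ℕ) (hj : j + 3 < n),
        1 ≤ (∑ j' ∈ Finset.Iic (⟨j + 1, by omega⟩ : Fin n), A ⟨1, by omega⟩ j')
          + (∑ j' ∈ Finset.Ici (⟨j + 1, by omega⟩ : Fin n), A ⟨0, by omega⟩ j')) ∧
      (∀ (i : ℕ) (hi : i + 3 < n),
        1 ≤ (∑ i' ∈ Finset.Iic (⟨i + 1, by omega⟩ : Fin n), A i' ⟨1, by omega⟩)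
          + (∑ i' ∈ Finset.Ici (⟨i + 1, by omega⟩ : Fin n), A i' ⟨0, by omega⟩))} := by
    rintro _ ⟨M, hM, rfl⟩
    refine ⟨fun i j hi hj hij => ?_, fun j hj => ?_, fun i hi => ?_⟩
    · have hint := ineq_one hM hi hj hij
      rw [← sum_Iic_row M (i + 1) j (by omega) (by omega),
        ← sum_Iic_col M (i + 1) (j + 1) (by omega) (by omega)] at hint
      beta_reduce
      exact_mod_cast hint
    · have h2 := ineq_two hM hj
      have hrow : ∑ j' : Fin n, M ⟨0, by omega⟩ j' = 1 := hM.1.2.2.1 _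
      have hint : (1 : ℤ) ≤ (∑ j' ∈ Finset.Iic (⟨j + 1, by omega⟩ : Fin n), M ⟨1, by omega⟩ j')
          + (∑ j' ∈ Finset.Ici (⟨j + 1, by omega⟩ : Fin n), M ⟨0, by omega⟩ j') := by
        rw [sum_Iic_row M 1 (j + 1) (by omega) (by omega),
          sum_Ici_row M j (by omega) (by omega), hrow]
        linarith
      beta_reduce
      exact_mod_cast hint
    · have h3 := ineq_three hM hi
      have hcol : ∑ i' : Fin n, M i' ⟨0, by omega⟩ = 1 := hM.1.2.1 _
      have hint : (1 : ℤ) ≤ (∑ i' ∈ Finset.Iic (⟨i + 1, by omega⟩ : Fin n), M i' ⟨1, by omega⟩)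
          + (∑ i' ∈ Finset.Ici (⟨i + 1, by omega⟩ : Fin n), M i' ⟨0, by omega⟩) := by
        rw [sum_Iic_col M (i + 1) 1 (by omega) (by omega),
          sum_Ici_col M i (by omega) (by omega), hcol]
        linarith
      beta_reduce
      exact_mod_cast hint
  have h2 : Convex ℝ {A : Fin n → Fin n → ℝ |
      (∀ (i j : ℕ) (hi : i + 2 < n) (hj : j + 2 < n), n ≤ i + j + 3 →
        1 ≤ (∑ j' ∈ Finset.Iic (⟨j, by omega⟩ : Fin n), A ⟨i + 1, by omega⟩ j')
          + (∑ i' ∈ Finset.Iic (⟨i + 1, by omega⟩ : Fin n), A i' ⟨j + 1, by omega⟩)) ∧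
      (∀ (j : ℕ) (hj : j + 3 < n),
        1 ≤ (∑ j' ∈ Finset.Iic (⟨j + 1, by omega⟩ : Fin n), A ⟨1, by omega⟩ j')
          + (∑ j' ∈ Finset.Ici (⟨j + 1, by omega⟩ : Fin n), A ⟨0, by omega⟩ j')) ∧
      (∀ (i : ℕ) (hi : i + 3 < n),
        1 ≤ (∑ i' ∈ Finset.Iic (⟨i + 1, by omega⟩ : Fin n), A i' ⟨1, by omega⟩)
          + (∑ i' ∈ Finset.Ici (⟨i + 1, by omega⟩ : Fin n), A i' ⟨0, by omega⟩))} := by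
    intro x hx y hy a b ha hb hab
    obtain ⟨hx1, hx2, hx3⟩ := hx
    obtain ⟨hy1, hy2, hy3⟩ := hy
    refine ⟨fun i j hi hj hij => ?_, fun j hj => ?_, fun i hi => ?_⟩
    · have Hx := hx1 i j hi hj hij
      have Hy := hy1 i j hi hj hij
      simp only [Pi.add_apply, Pi.smul_apply, smul_eq_mul, Finset.sum_add_distrib,
        ← Finset.mul_sum]
      nlinarith [mul_le_mul_of_nonneg_left Hx ha, mul_le_mul_of_nonneg_left Hy hb]
    · have Hx := hx2 j hj
      have Hy := hy2 j hj
      simp only [Pi.add_apply, Pi.smul_apply, smul_eq_mul, Finset.sum_add_distrib,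
        ← Finset.mul_sum]
      nlinarith [mul_le_mul_of_nonneg_left Hx ha, mul_le_mul_of_nonneg_left Hy hb]
    · have Hx := hx3 i hi
      have Hy := hy3 i hi
      simp only [Pi.add_apply, Pi.smul_apply, smul_eq_mul, Finset.sum_add_distrib,
        ← Finset.mul_sum]
      nlinarith [mul_le_mul_of_nonneg_left Hx ha, mul_le_mul_of_nonneg_left Hy hb]
  exact fun A hA => convexHull_min h1 h2 hA
end

section
/- Let n ≥ 1 and let TSSCPP(n) ⊆ ℝ^(n×n) be the convex hull of the set of n×n magog matrices (viewed as real matrices). Then the set of extreme points (vertices) of TSSCPP(n) is exactly the set of n×n magog matrices; in particular every n×n magog matrix is an extreme point of TSSCPP(n). -/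
/-- The partial column sum. -/
noncomputable def pcs (n : ℕ) (X : Fin n → Fin n → ℝ) (i j : Fin n) : ℝ :=
  ∑ i' ∈ Finset.Iic i, X i' j

lemma pcs_combo (n : ℕ) (X Y : Fin n → Fin n → ℝ) (a b : ℝ) (i j : Fin n) :
    pcs n (a • X + b • Y) i j = a * pcs n X i j + b * pcs n Y i j := by
  simp [pcs, Finset.sum_add_distrib, Finset.mul_sum]

lemma pcs_hull_bound (n : ℕ) (X : Fin n → Fin n → ℝ)
    (hX : X ∈ convexHull ℝ (magogReal n)) (i j : Fin n) :
    0 ≤ pcs n X i j ∧ pcs n X i j ≤ 1 := by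
  have : X ∈ {Y : Fin n → Fin n → ℝ | ∀ i j, 0 ≤ pcs n Y i j ∧ pcs n Y i j ≤ 1} := by
    refine convexHull_min ?_ ?_ hX
    · rintro Y ⟨M, ⟨⟨_, _, _, hcol, _⟩, _⟩, rfl⟩ i j
      have := hcol i j
      constructor
      · have : (0 : ℝ) ≤ ((∑ i' ∈ Finset.Iic i, M i' j : ℤ) : ℝ) := by
          exact_mod_cast this.1
        simpa [pcs] using this
      · have : ((∑ i' ∈ Finset.Iic i, M i' j : ℤ) : ℝ) ≤ 1 := by
          exact_mod_cast this.2
        simpa [pcs] using this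
    · intro Y hY Z hZ a b ha hb hab i j
      rw [pcs_combo]
      have h1 := hY i j
      have h2 := hZ i j
      constructor
      · nlinarith [h1.1, h1.2, h2.1, h2.2]
      · nlinarith [h1.1, h1.2, h2.1, h2.2]
  exact this i j

lemma recover (n : ℕ) (X Y : Fin n → Fin n → ℝ)
    (h : ∀ i j, pcs n X i j = pcs n Y i j) : X = Y := by
  funext i j
  have hnot : i ∉ Finset.Iio i := by simp
  have hins : Finset.Iic i = insert i (Finset.Iio i) := by
    ext a; simp [Finset.mem_Iic, Finset.mem_Iio, le_iff_lt_or_eq, or_comm]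
  have hIio : ∑ i' ∈ Finset.Iio i, X i' j = ∑ i' ∈ Finset.Iio i, Y i' j := by
    by_cases h0 : i.val = 0
    · have he : Finset.Iio i = ∅ := by
        ext a; simp only [Finset.mem_Iio, Finset.notMem_empty, iff_false, not_lt, Fin.le_def]
        omega
      simp [he]
    · obtain ⟨k, hk⟩ := Nat.exists_eq_succ_of_ne_zero h0
      have hkn : k < n := by omega
      have he : Finset.Iio i = Finset.Iic ⟨k, hkn⟩ := by
        ext a; simp only [Finset.mem_Iio, Finset.mem_Iic, Fin.lt_def, Fin.le_def]
        omega
      rw [he]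
      simpa [pcs] using h ⟨k, hkn⟩ j
  have hi := h i j
  rw [pcs, pcs, hins, Finset.sum_insert hnot, Finset.sum_insert hnot, hIio] at hi
  linarith

/-- The extreme points (vertices) of the magog matrix polytope `TSSCPP(n)`,
the convex hull of the `n × n` magog matrices, are exactly the magog
matrices. -/
theorem extremePoints_tsscppPolytope (n : ℕ) (hn : 0 < n) :
    Set.extremePoints ℝ (convexHull ℝ (magogReal n)) = magogReal n := by
  apply Set.Subset.antisymm
  · exact extremePoints_convexHull_subset
  · rintro A hA
    obtain ⟨M, hM, rfl⟩ := hA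
    set A : Fin n → Fin n → ℝ := fun i j => (M i j : ℝ) with hAdef
    refine mem_extremePoints.mpr
      ⟨subset_convexHull ℝ _ ⟨M, hM, rfl⟩, ?_⟩
    intro x hx y hy hseg
    obtain ⟨a, b, ha, hb, hab, hxy⟩ := hseg
    have hxb := pcs_hull_bound n x hx
    have hyb := pcs_hull_bound n y hy
    have key : ∀ i j, pcs n x i j = pcs n A i j ∧ pcs n y i j = pcs n A i j := by
      intro i j
      have hcol := hM.1.2.2.2.1 i j
      have hcomb : a * pcs n x i j + b * pcs n y i j = pcs n A i j := by
        rw [← pcs_combo]; rw [hxy]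
      have hAval : pcs n A i j = ((∑ i' ∈ Finset.Iic i, M i' j : ℤ) : ℝ) := by
        simp [pcs, hAdef]
      have hx1 := (hxb i j).1; have hx2 := (hxb i j).2
      have hy1 := (hyb i j).1; have hy2 := (hyb i j).2
      rcases (by omega : (∑ i' ∈ Finset.Iic i, M i' j) = 0 ∨
          (∑ i' ∈ Finset.Iic i, M i' j) = 1) with h0 | h1
      · rw [h0] at hAval; push_cast at hAval
        constructor <;> nlinarith
      · rw [h1] at hAval; push_cast at hAval
        constructor <;> nlinarith
    constructor
    · exact recover n x A fun i j => (key i j).1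
    · exact recover n y A fun i j => (key i j).2
end
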